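/- arXiv:2406.19481 — 7 statements merged into one kernel-verified Lean document; each statement's English description precedes it below -/
import Mathlib

section
/- Let n ≥ 1 and q ≥ 2 be integers. Let G be the cyclic group Multiplicative (ZMod n), and let ρ be the ℤ-linear representation of G on ZMod (q^n − 1) under which Multiplicative.ofAdd j acts by multiplication by q^(j.val) (this is well defined since q^n ≡ 1 mod (q^n − 1)). Then the group cohomology of G with coefficients in ρ vanishes in all positive degrees: H^s(G; ρ) ≅ 0 for every s ≥ 1. -/
noncomputable section
namespace Stmt6Aux

open groupCohomology CategoryTheory Finset

lemma contractNth_zero_cons {α : Type*} {s : ℕ} (op : α → α → α) (x : α) (g : Fin (s + 1) → α) :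
    Fin.contractNth 0 op (Fin.cons x g) =
      (Fin.cons (op x (g 0)) (fun i : Fin s => g i.succ) : Fin (s + 1) → α) := by
  funext k
  refine Fin.cases ?_ (fun i => ?_) k
  · rw [Fin.contractNth_apply_of_eq _ _ _ _ (by simp)]
    simp
  · rw [Fin.contractNth_apply_of_gt _ _ _ _ (by simp)]
    simp

lemma contractNth_succ_cons {α : Type*} {s : ℕ} (op : α → α → α) (x : α) (j : Fin (s + 1))
    (g : Fin (s + 1) → α) :
    Fin.contractNth j.succ op (Fin.cons x g) =
      (Fin.cons x (Fin.contractNth j op g) : Fin (s + 1) → α) := by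
  funext k
  refine Fin.cases ?_ (fun i => ?_) k
  · rw [Fin.contractNth_apply_of_lt _ _ _ _ (by simp)]
    simp
  · rcases lt_trichotomy (i : ℕ) (j : ℕ) with h | h | h
    · rw [Fin.contractNth_apply_of_lt _ _ _ _ (by simpa using h)]
      simp only [Fin.cons_succ]
      rw [Fin.contractNth_apply_of_lt _ _ _ _ h]
      simp [Fin.castSucc_fin_succ]
    · rw [Fin.contractNth_apply_of_eq _ _ _ _ (by simpa using h)]
      simp only [Fin.cons_succ]
      rw [Fin.contractNth_apply_of_eq _ _ _ _ h]
      simp [Fin.castSucc_fin_succ]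
    · rw [Fin.contractNth_apply_of_gt _ _ _ _ (by simpa using h)]
      simp only [Fin.cons_succ]
      rw [Fin.contractNth_apply_of_gt _ _ _ _ h]

/-- Postcomposition with an equivariant linear map commutes with the inhomogeneous
differential. -/
lemma comp_d {k G : Type} [CommRing k] [Group G] {A B : Rep k G} (p : A →ₗ[k] B)
    (hp : ∀ (g : G) (x : A), p (A.ρ g x) = B.ρ g (p x)) (s : ℕ) (f : (Fin s → G) → A) :
    (inhomogeneousCochains.d B s).hom (fun g => p (f g)) =
      fun g => p ((inhomogeneousCochains.d A s).hom f g) := by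
  funext g
  simp only [inhomogeneousCochains.d_hom_apply, map_add, map_sum, map_smul, hp]

/-- The coinduced representation `Fun(G, ℤ)`, with `(g • φ) x = φ (x * g)`. -/
def coind (G : Type) [Group G] : Representation ℤ G (G → ℤ) where
  toFun g :=
    { toFun := fun φ x => φ (x * g)
      map_add' := fun _ _ => rfl
      map_smul' := fun _ _ => rfl }
  map_one' := by ext φ x; simp
  map_mul' g h := by ext φ x; simp [mul_assoc]

/-- The inhomogeneous differential on cochains of `coind G`, with clean types. -/
def dd (G : Type) [Group G] (s : ℕ) (f : (Fin s → G) → (G → ℤ)) :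
    (Fin (s + 1) → G) → (G → ℤ) :=
  (inhomogeneousCochains.d (Rep.of (coind G)) s).hom f

lemma dd_apply (G : Type) [Group G] (s : ℕ) (f : (Fin s → G) → (G → ℤ))
    (g : Fin (s + 1) → G) (x : G) :
    dd G s f g x = f (fun i => g i.succ) (x * g 0) +
      ∑ j : Fin (s + 1), (-1 : ℤ) ^ ((j : ℕ) + 1) * f (Fin.contractNth j (· * ·) g) x := by
  show ((inhomogeneousCochains.d (Rep.of (coind G)) s).hom f g : G → ℤ) x = _
  rw [inhomogeneousCochains.d_hom_apply]
  show ((coind G (g 0) (f fun i => g i.succ) : G → ℤ) +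
      ∑ j : Fin (s + 1), (-1 : ℤ) ^ ((j : ℕ) + 1) •
        f (Fin.contractNth j (· * ·) g)) x = _
  simp [coind, Finset.sum_apply]

/-- The contracting homotopy on inhomogeneous cochains of the coinduced representation. -/
def hmap {G : Type} [Group G] {s : ℕ} (f : (Fin (s + 1) → G) → (G → ℤ)) :
    (Fin s → G) → (G → ℤ) :=
  fun g x => f (Fin.cons x g) 1

lemma homotopy (G : Type) [Group G] (s : ℕ) (f : (Fin (s + 1) → G) → (G → ℤ)) :
    hmap (dd G (s + 1) f) + dd G s (hmap f) = f := by
  funext g x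
  show (dd G (s + 1) f) (Fin.cons x g) 1 + (dd G s (hmap f) g) x = f g x
  rw [dd_apply, dd_apply]
  rw [Fin.sum_univ_succ (fun j : Fin (s + 2) =>
    ((-1 : ℤ) ^ ((j : ℕ) + 1) * f (Fin.contractNth j (· * ·) (Fin.cons x g)) 1))]
  have hc : (fun i : Fin (s + 1) => (Fin.cons x g : Fin (s + 2) → G) i.succ) = g := by funext i; simp
  simp only [Fin.cons_zero, Fin.cons_succ, Fin.val_succ, Fin.val_zero,
    contractNth_zero_cons, contractNth_succ_cons, one_mul, pow_one, hmap, hc]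
  have hs2 : ∑ j : Fin (s + 1),
      (-1 : ℤ) ^ ((j : ℕ) + 1 + 1) * f (Fin.cons x (Fin.contractNth j (· * ·) g)) 1 =
      ∑ j : Fin (s + 1),
      -((-1 : ℤ) ^ ((j : ℕ) + 1) * f (Fin.cons x (Fin.contractNth j (· * ·) g)) 1) :=
    Finset.sum_congr rfl fun j _ => by ring
  rw [hs2, Finset.sum_neg_distrib]
  ring

variable (n q : ℕ)

/-- The "weight" function `W x = q ^ (toAdd x).val` in `ZMod (q ^ n - 1)`. -/
def W : Multiplicative (ZMod n) → ZMod (q ^ n - 1) :=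
  fun x => (q : ZMod (q ^ n - 1)) ^ (Multiplicative.toAdd x).val

/-- `α = σ - q` acting on `Fun(G, ℤ)`. -/
def alphaMap : (Multiplicative (ZMod n) → ℤ) →ₗ[ℤ] (Multiplicative (ZMod n) → ℤ) where
  toFun φ := fun x => φ (Multiplicative.ofAdd 1 * x) - q * φ x
  map_add' φ ψ := by funext x; simp; ring
  map_smul' r φ := by funext x; simp; ring

/-- `β : Fun(G, ℤ) → ZMod (q ^ n - 1)`, `β φ = ∑ W(x⁻¹) φ(x)`. -/
def betaMap [NeZero n] : (Multiplicative (ZMod n) → ℤ) →ₗ[ℤ] ZMod (q ^ n - 1) where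
  toFun φ := ∑ x : Multiplicative (ZMod n), W n q x⁻¹ * ((φ x : ℤ) : ZMod (q ^ n - 1))
  map_add' φ ψ := by
    simp only [Pi.add_apply, Int.cast_add, mul_add]
    rw [Finset.sum_add_distrib]
  map_smul' r φ := by
    simp only [Pi.smul_apply, smul_eq_mul, Int.cast_mul, RingHom.id_apply, zsmul_eq_mul,
      Finset.mul_sum]
    congr 1; funext x; push_cast; ring

variable (hn : 1 ≤ n) (hq : 2 ≤ q)
include hq in
lemma hqn_cast : (q : ZMod (q ^ n - 1)) ^ n = 1 := by
  have h1 : 1 ≤ q ^ n := Nat.one_le_pow _ _ (by omega)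
  have : ((q ^ n : ℕ) : ZMod (q ^ n - 1)) = ((q ^ n - 1 : ℕ) : ZMod (q ^ n - 1)) + 1 := by
    rw [← Nat.cast_one (R := ZMod (q ^ n - 1)), ← Nat.cast_add, Nat.sub_add_cancel h1]
  rw [← Nat.cast_pow, this, ZMod.natCast_self, zero_add]

include hq in
lemma qpow_mod (a : ℕ) : (q : ZMod (q ^ n - 1)) ^ a = (q : ZMod (q ^ n - 1)) ^ (a % n) := by
  conv_lhs => rw [← Nat.mod_add_div a n, pow_add, pow_mul, hqn_cast n q hq, one_pow, mul_one]

include hq in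
lemma W_mul [NeZero n] (x y : Multiplicative (ZMod n)) : W n q (x * y) = W n q x * W n q y := by
  unfold W
  rw [← pow_add, toAdd_mul, ZMod.val_add, ← qpow_mod n q hq]

omit hq in
lemma W_one [NeZero n] : W n q 1 = 1 := by
  unfold W
  simp

include hq in
lemma W_inv_mul [NeZero n] (x : Multiplicative (ZMod n)) : W n q x⁻¹ * W n q x = 1 := by
  rw [← W_mul n q hq, inv_mul_cancel, W_one n q]

include hq in
lemma W_sigma [NeZero n] : W n q (Multiplicative.ofAdd 1) = q := by
  unfold W
  rw [toAdd_ofAdd, ZMod.val_one_eq_one_mod, ← qpow_mod n q hq, pow_one]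

lemma alpha_equivariant (g : Multiplicative (ZMod n)) (φ : Multiplicative (ZMod n) → ℤ) :
    alphaMap n q (coind (Multiplicative (ZMod n)) g φ) =
      coind (Multiplicative (ZMod n)) g (alphaMap n q φ) := by
  funext x
  simp only [alphaMap, coind, LinearMap.coe_mk, AddHom.coe_mk, MonoidHom.coe_mk, OneHom.coe_mk]
  rw [mul_assoc]

include hq in
lemma beta_equivariant [NeZero n] (g : Multiplicative (ZMod n))
    (φ : Multiplicative (ZMod n) → ℤ) :
    betaMap n q (coind (Multiplicative (ZMod n)) g φ) = W n q g * betaMap n q φ := by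
  simp only [betaMap, coind, LinearMap.coe_mk, AddHom.coe_mk, MonoidHom.coe_mk, OneHom.coe_mk]
  rw [Finset.mul_sum]
  refine Fintype.sum_equiv (Equiv.mulRight g) _ _ fun x => ?_
  simp only [Equiv.coe_mulRight]
  have : W n q g * W n q (x * g)⁻¹ = W n q x⁻¹ := by
    rw [← W_mul n q hq, mul_inv_rev, ← mul_assoc, mul_inv_cancel, one_mul]
  rw [← this]; ring

include hq in
lemma beta_alpha [NeZero n] (φ : Multiplicative (ZMod n) → ℤ) :
    betaMap n q (alphaMap n q φ) = 0 := by
  simp only [betaMap, alphaMap, LinearMap.coe_mk, AddHom.coe_mk]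
  have : ∀ x : Multiplicative (ZMod n),
      W n q x⁻¹ * (((φ (Multiplicative.ofAdd 1 * x) - q * φ x : ℤ)) : ZMod (q ^ n - 1)) =
      W n q x⁻¹ * (φ (Multiplicative.ofAdd 1 * x) : ℤ) - q * (W n q x⁻¹ * (φ x : ℤ)) := by
    intro x; push_cast; ring
  rw [Finset.sum_congr rfl fun x _ => this x, Finset.sum_sub_distrib, ← Finset.mul_sum]
  have h2 : ∑ x : Multiplicative (ZMod n),
      W n q x⁻¹ * ((φ (Multiplicative.ofAdd 1 * x) : ℤ) : ZMod (q ^ n - 1)) =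
      ∑ x : Multiplicative (ZMod n), (q : ZMod (q ^ n - 1)) * (W n q x⁻¹ * (φ x : ℤ)) := by
    refine Fintype.sum_equiv (Equiv.mulLeft (Multiplicative.ofAdd 1)) _ _ fun x => ?_
    simp only [Equiv.coe_mulLeft]
    have : W n q (Multiplicative.ofAdd 1 * x)⁻¹ * W n q (Multiplicative.ofAdd 1) = W n q x⁻¹ := by
      rw [← W_mul n q hq, mul_inv_rev, mul_assoc, inv_mul_cancel, mul_one]
    rw [← this, W_sigma n q hq]; ring
  rw [h2, ← Finset.mul_sum, sub_self]


lemma alpha_inj (n q : ℕ) (hq : 2 ≤ q) (hn : 1 ≤ n) (φ : Multiplicative (ZMod n) → ℤ)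
    (h : alphaMap n q φ = 0) : φ = 0 := by
  have hrec : ∀ x, φ (Multiplicative.ofAdd 1 * x) = q * φ x := by
    intro x
    have := congrFun h x
    simp only [alphaMap, LinearMap.coe_mk, AddHom.coe_mk, Pi.zero_apply] at this
    linarith
  have hk : ∀ (k : ℕ) (x), φ ((Multiplicative.ofAdd (1 : ZMod n)) ^ k * x) = q ^ k * φ x := by
    intro k
    induction k with
    | zero => intro x; simp
    | succ k ih =>
      intro x
      rw [pow_succ', mul_assoc, hrec, ih]
      push_cast; ring
  have hsig : (Multiplicative.ofAdd (1 : ZMod n)) ^ n = 1 := by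
    rw [← ofAdd_nsmul]
    norm_num
  funext x
  have := hk n x
  rw [hsig, one_mul] at this
  have h2 : ((q : ℤ) ^ n - 1) * φ x = 0 := by linarith
  have h3 : (2 : ℤ) ≤ (q : ℤ) ^ n := by
    calc (2 : ℤ) ≤ (q : ℤ) := by exact_mod_cast hq
    _ = (q : ℤ) ^ 1 := (pow_one _).symm
    _ ≤ (q : ℤ) ^ n := pow_le_pow_right₀ (by omega) hn
  have h4 : ((q : ℤ) ^ n - 1) ≠ 0 := by omega
  have := mul_eq_zero.1 h2
  simp only [Pi.zero_apply]
  tauto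

/-- A set-theoretic section of `betaMap`. -/
def secMap (n q : ℕ) : ZMod (q ^ n - 1) → (Multiplicative (ZMod n) → ℤ) :=
  fun c x => if x = 1 then (c.val : ℤ) else 0

lemma beta_sec (n q : ℕ) [NeZero n] [NeZero (q ^ n - 1)] (hq : 2 ≤ q) (c : ZMod (q ^ n - 1)) :
    betaMap n q (secMap n q c) = c := by
  simp only [betaMap, secMap, LinearMap.coe_mk, AddHom.coe_mk]
  have : ∀ x : Multiplicative (ZMod n),
      W n q x⁻¹ * (((if x = 1 then (c.val : ℤ) else 0) : ℤ) : ZMod (q ^ n - 1)) =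
      if x = 1 then W n q x⁻¹ * (c.val : ℤ) else 0 := by
    intro x
    split <;> simp
  rw [Finset.sum_congr rfl fun x _ => this x, Finset.sum_ite_eq' Finset.univ 1
    (fun x => W n q x⁻¹ * ((c.val : ℤ) : ZMod (q ^ n - 1)))]
  simp only [Finset.mem_univ, if_true, inv_one, W_one n q]
  rw [one_mul]
  push_cast
  exact ZMod.natCast_rightInverse c

lemma ker_beta (n q : ℕ) [NeZero n] (hn : 1 ≤ n) (hq : 2 ≤ q)
    (φ : Multiplicative (ZMod n) → ℤ) (h : betaMap n q φ = 0) :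
    ∃ ψ, alphaMap n q ψ = φ := by
  set a : ℕ → ℤ := fun i => φ (Multiplicative.ofAdd ((i : ℕ) : ZMod n)) with ha
  set S : ℤ := ∑ l ∈ Finset.range n, (q : ℤ) ^ (n - 1 - l) * a l with hS
  -- β φ = q • S
  have hbS : betaMap n q φ = (q : ZMod (q ^ n - 1)) * (S : ZMod (q ^ n - 1)) := by
    have e : Function.Bijective (fun i : Fin n =>
        Multiplicative.ofAdd ((i : ℕ) : ZMod n)) := by
      constructor
      · intro i j hij
        have : ((i : ℕ) : ZMod n) = ((j : ℕ) : ZMod n) := by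
          simpa using hij
        have := congrArg ZMod.val this
        rwa [ZMod.val_natCast_of_lt i.isLt, ZMod.val_natCast_of_lt j.isLt, Fin.val_injective.eq_iff] at this
      · intro x
        refine ⟨⟨(Multiplicative.toAdd x).val, ZMod.val_lt _⟩, ?_⟩
        simp [ZMod.natCast_rightInverse (Multiplicative.toAdd x)]
    have hWi : ∀ i : Fin n, W n q (Multiplicative.ofAdd ((i : ℕ) : ZMod n))⁻¹ =
        (q : ZMod (q ^ n - 1)) ^ (n - (i : ℕ)) := by
      intro i
      have h1 : (Multiplicative.ofAdd ((i : ℕ) : ZMod n))⁻¹ =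
          Multiplicative.ofAdd (-((i : ℕ) : ZMod n)) := rfl
      rw [h1]
      show (q : ZMod (q ^ n - 1)) ^ (-((i : ℕ) : ZMod n)).val = _
      rw [ZMod.neg_val', ZMod.val_natCast_of_lt i.isLt, ← qpow_mod n q hq]
    have := Fintype.sum_bijective _ e
      (fun i : Fin n => (q : ZMod (q ^ n - 1)) ^ (n - (i : ℕ)) * ((a i : ℤ) : ZMod (q ^ n - 1)))
      (fun x => W n q x⁻¹ * ((φ x : ℤ) : ZMod (q ^ n - 1)))
      (fun i => by rw [hWi i])
    rw [show betaMap n q φ = ∑ x : Multiplicative (ZMod n),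
      W n q x⁻¹ * ((φ x : ℤ) : ZMod (q ^ n - 1)) from rfl, ← this]
    rw [Fin.sum_univ_eq_sum_range (fun i =>
      (q : ZMod (q ^ n - 1)) ^ (n - i) * ((a i : ℤ) : ZMod (q ^ n - 1)))]
    rw [hS]
    push_cast
    rw [Finset.mul_sum]
    refine Finset.sum_congr rfl fun i hi => ?_
    have hi' : i < n := Finset.mem_range.1 hi
    rw [← mul_assoc, ← pow_succ']
    congr 2
    omega
  have hdvd : ((q ^ n - 1 : ℕ) : ℤ) ∣ S := by
    have h0 : (q : ZMod (q ^ n - 1)) * (S : ZMod (q ^ n - 1)) = 0 := by rw [← hbS, h]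
    have : (S : ZMod (q ^ n - 1)) = 0 := by
      calc (S : ZMod (q ^ n - 1)) = (q : ZMod (q ^ n - 1)) ^ n * S := by
            rw [hqn_cast n q hq, one_mul]
        _ = (q : ZMod (q ^ n - 1)) ^ (n - 1) * ((q : ZMod (q ^ n - 1)) * S) := by
            rw [← mul_assoc, ← pow_succ]
            congr 2
            omega
        _ = 0 := by rw [h0, mul_zero]
    exact (ZMod.intCast_zmod_eq_zero_iff_dvd S _).1 this
  obtain ⟨c', hc'⟩ := hdvd
  set b : ℕ → ℤ := fun i => (q : ℤ) ^ i * (-c') +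
    ∑ l ∈ Finset.range i, (q : ℤ) ^ (i - 1 - l) * a l with hb
  have b_rec : ∀ i, b (i + 1) = q * b i + a i := by
    intro i
    rw [hb]
    simp only
    rw [Finset.sum_range_succ]
    have : ∑ l ∈ Finset.range i, (q : ℤ) ^ (i + 1 - 1 - l) * a l =
        ∑ l ∈ Finset.range i, (q : ℤ) * ((q : ℤ) ^ (i - 1 - l) * a l) := by
      refine Finset.sum_congr rfl fun l hl => ?_
      have : l < i := Finset.mem_range.1 hl
      rw [← mul_assoc, ← pow_succ']
      congr 2
      omega
    rw [this, ← Finset.mul_sum]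
    simp only [show i + 1 - 1 - i = 0 from by omega, pow_zero, one_mul]
    ring
  have b_n : b n = -c' := by
    rw [hb]
    simp only
    rw [← hS, hc']
    have : ((q ^ n - 1 : ℕ) : ℤ) = (q : ℤ) ^ n - 1 := by
      have h1 : 1 ≤ q ^ n := Nat.one_le_pow _ _ (by omega)
      push_cast [Nat.cast_sub h1]
      ring
    rw [this]
    ring
  refine ⟨fun x => b (Multiplicative.toAdd x).val, ?_⟩
  funext x
  show b (Multiplicative.toAdd (Multiplicative.ofAdd (1 : ZMod n) * x)).val -
      q * b (Multiplicative.toAdd x).val = φ x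
  rw [toAdd_mul, toAdd_ofAdd]
  set j : ZMod n := Multiplicative.toAdd x with hj
  have hjval : j.val < n := ZMod.val_lt j
  have key : b ((1 + j).val) = b (j.val + 1) := by
    have hadd : (1 + j).val = (1 + j.val) % n := by
      rw [ZMod.val_add, ZMod.val_one_eq_one_mod, Nat.mod_add_mod]
    rcases Nat.lt_or_ge (j.val + 1) n with hlt | hge
    · rw [hadd, Nat.mod_eq_of_lt (by omega)]
      congr 1
      omega
    · have hn' : j.val + 1 = n := by omega
      have b0 : b 0 = -c' := by rw [hb]; simp
      rw [hadd, show (1 + j.val) = n by omega, Nat.mod_self, b0, hn']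
      exact b_n.symm
  rw [key, b_rec]
  have : a j.val = φ x := by
    rw [ha]
    simp only
    rw [ZMod.natCast_rightInverse j, hj, ofAdd_toAdd]
  rw [this]
  ring


/-- `d` on cochains of `Rep.of ρ`, with clean types. -/
def dM {n q : ℕ} (ρ : Representation ℤ (Multiplicative (ZMod n)) (ZMod (q ^ n - 1))) (s : ℕ)
    (f : (Fin s → Multiplicative (ZMod n)) → ZMod (q ^ n - 1)) :
    (Fin (s + 1) → Multiplicative (ZMod n)) → ZMod (q ^ n - 1) :=
  (inhomogeneousCochains.d (Rep.of ρ) s).hom f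

omit hn hq in
lemma dd_sub {G : Type} [Group G] (s : ℕ) (f h : (Fin s → G) → (G → ℤ)) :
    dd G s (f - h) = dd G s f - dd G s h :=
  map_sub (inhomogeneousCochains.d (Rep.of (coind G)) s).hom f h

omit hn hq in
lemma dd_dd (G : Type) [Group G] (s : ℕ) (f : (Fin s → G) → (G → ℤ)) :
    dd G (s + 1) (dd G s f) = 0 := by
  have h := (inhomogeneousCochains (Rep.of (coind G))).d_comp_d s (s + 1) (s + 1 + 1)
  rw [inhomogeneousCochains.d_def, inhomogeneousCochains.d_def] at h
  have h2 := congrArg ModuleCat.Hom.hom h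
  rw [ModuleCat.hom_comp] at h2
  exact LinearMap.congr_fun h2 f

end Stmt6Aux


open Stmt6Aux groupCohomology CategoryTheory in
/-- Let `n ≥ 1`, `q ≥ 2`, `G = Multiplicative (ZMod n)`, and let `ρ`
be the ℤ-linear representation of `G` on `ZMod (q^n - 1)` where `Multiplicative.ofAdd j`
acts by multiplication by `q ^ j.val`.  Then the group cohomology `H^s(G; ρ)` vanishes
for all `s ≥ 1`. -/
theorem stmt_6 (n q : ℕ) (hn : 1 ≤ n) (hq : 2 ≤ q)
    (ρ : Representation ℤ (Multiplicative (ZMod n)) (ZMod (q ^ n - 1)))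
    (hρ : ∀ (j : ZMod n) (x : ZMod (q ^ n - 1)),
      ρ (Multiplicative.ofAdd j) x = (q : ZMod (q ^ n - 1)) ^ j.val * x)
    (s : ℕ) (hs : 1 ≤ s) :
    CategoryTheory.Limits.IsZero (groupCohomology (Rep.of ρ) s) := by
  haveI : NeZero n := ⟨by omega⟩
  haveI : NeZero (q ^ n - 1) := ⟨by
    have : q ≤ q ^ n := Nat.le_self_pow (by omega) q
    omega⟩
  set G := Multiplicative (ZMod n) with hG
  obtain ⟨t, rfl⟩ : ∃ t, s = t + 1 := ⟨s - 1, by omega⟩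
  -- equivariance of β with respect to ρ
  have hbeta_rho : ∀ (g : G) (φ : G → ℤ),
      betaMap n q ((Rep.of (coind G)).ρ g φ) = (Rep.of ρ).ρ g (betaMap n q φ) := by
    intro g φ
    show betaMap n q (coind G g φ) = ρ g (betaMap n q φ)
    rw [beta_equivariant n q hq g φ]
    have := hρ (Multiplicative.toAdd g) (betaMap n q φ)
    rw [ofAdd_toAdd] at this
    rw [this]
    rfl
  have halpha_rho : ∀ (g : G) (φ : G → ℤ),
      alphaMap n q ((Rep.of (coind G)).ρ g φ) = (Rep.of (coind G)).ρ g (alphaMap n q φ) :=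
    fun g φ => alpha_equivariant n q g φ
  -- commutation of the differentials with α and β
  have cdβ : ∀ (s : ℕ) (f : (Fin s → G) → (G → ℤ)),
      dM ρ s (fun g => betaMap n q (f g)) = fun g => betaMap n q (dd G s f g) :=
    fun s f => comp_d (A := Rep.of (coind G)) (B := Rep.of ρ) (betaMap n q) hbeta_rho s f
  have cdα : ∀ (s : ℕ) (f : (Fin s → G) → (G → ℤ)),
      dd G s (fun g => alphaMap n q (f g)) = fun g => alphaMap n q (dd G s f g) :=
    fun s f => comp_d (A := Rep.of (coind G)) (B := Rep.of (coind G)) (alphaMap n q) halpha_rho s f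
  -- reduce to exactness of the inhomogeneous cochain complex
  suffices hex : (inhomogeneousCochains (Rep.of ρ)).ExactAt (t + 1) by
    rw [HomologicalComplex.exactAt_iff_isZero_homology] at hex
    exact hex
  rw [HomologicalComplex.exactAt_iff' _ t (t + 1) (t + 2)
    (CochainComplex.prev_nat_succ t) (CochainComplex.next ℕ (t + 1))]
  rw [ShortComplex.moduleCat_exact_iff]
  intro f hf
  -- `f` is a cocycle of `Rep.of ρ` in degree `t + 1`
  have hf' : dM ρ (t + 1) f = 0 := by
    show (inhomogeneousCochains.d (Rep.of ρ) (t + 1)).hom f = 0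
    rw [← inhomogeneousCochains.d_def (Rep.of ρ) (t + 1)]
    exact hf
  -- lift `f` to an `R`-cochain
  set ft : (Fin (t + 1) → G) → (G → ℤ) := fun g => secMap n q (f g) with hft
  have hβft : (fun g => betaMap n q (ft g)) = f := funext fun g => beta_sec n q hq (f g)
  set φ : (Fin (t + 2) → G) → (G → ℤ) := dd G (t + 1) ft with hφ
  have hβφ : ∀ g, betaMap n q (φ g) = 0 := by
    intro g
    have h1 : (fun g => betaMap n q (φ g)) = dM ρ (t + 1) (fun g => betaMap n q (ft g)) :=
      (cdβ (t + 1) ft).symm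
    have h2 : (fun g => betaMap n q (φ g)) = 0 := by rw [h1, hβft, hf']
    exact congrFun h2 g
  -- pull `dft` back through `α`
  choose u hu using fun g => ker_beta n q hn hq (φ g) (hβφ g)
  have hdu : dd G (t + 2) u = 0 := by
    funext g
    refine alpha_inj n q hq hn _ ?_
    have h1 : (fun g => alphaMap n q (dd G (t + 2) u g)) = dd G (t + 2) (fun g => alphaMap n q (u g)) :=
      (cdα (t + 2) u).symm
    have h2 : (fun g => alphaMap n q (u g)) = φ := funext hu
    have h3 : (fun g => alphaMap n q (dd G (t + 2) u g)) = 0 := by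
      rw [h1, h2, hφ, dd_dd]
    exact congrFun h3 g
  -- correct the lift by a coboundary
  set u' : (Fin (t + 1) → G) → (G → ℤ) := hmap u with hu'
  have hddu' : dd G (t + 1) u' = u := by
    have := homotopy G (t + 1) u
    rwa [hdu, show hmap (0 : (Fin (t + 2 + 1) → G) → (G → ℤ)) = 0 from rfl, zero_add] at this
  set ft' : (Fin (t + 1) → G) → (G → ℤ) := ft - fun g => alphaMap n q (u' g) with hft'
  have hdft' : dd G (t + 1) ft' = 0 := by
    rw [hft', dd_sub, cdα (t + 1) u', hddu']
    funext g
    simp [hu g, hφ]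
  -- the corrected lift is a coboundary in the `R`-complex
  have hco : dd G t (hmap ft') = ft' := by
    have := homotopy G t ft'
    rwa [hdft', show hmap (0 : (Fin (t + 1 + 1) → G) → (G → ℤ)) = 0 from rfl, zero_add] at this
  -- push back down to the `M`-complex
  refine ⟨fun g => betaMap n q (hmap ft' g), ?_⟩
  show (inhomogeneousCochains (Rep.of ρ)).d t (t + 1) (fun g => betaMap n q (hmap ft' g)) = f
  rw [inhomogeneousCochains.d_def (Rep.of ρ) t]
  show dM ρ t (fun g => betaMap n q (hmap ft' g)) = f
  rw [cdβ t (hmap ft'), hco]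
  funext g
  rw [hft']
  show betaMap n q (ft g - alphaMap n q (u' g)) = f g
  rw [map_sub, beta_alpha n q hq, sub_zero, ← hβft]
end
end

section
/- Let n ≥ 1 and q ≥ 2 be integers. Let G be the cyclic group Multiplicative (ZMod n), and let ρ be the ℤ-linear representation of G on ZMod (q^n − 1) under which Multiplicative.ofAdd j acts by multiplication by q^(j.val). Then the group homology of G with coefficients in ρ vanishes in all positive degrees: H_s(G; ρ) ≅ 0 for every s ≥ 1. -/
open CategoryTheory

/-- Group homology `H_s(G; A)` of a commutative group `G` with coefficients in a
`ℤ`-linear representation `A`, defined as `Tor_s^{ℤ[G]}(ℤ, A)`, where `ℤ` carries the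
trivial `G`-action and `A` is viewed as a module over the group ring `ℤ[G]`. -/
noncomputable def groupHomology' {G : Type} [CommGroup G] (A : Rep ℤ G) (s : ℕ) :
    ModuleCat (MonoidAlgebra ℤ G) :=
  ((Tor (ModuleCat (MonoidAlgebra ℤ G)) s).obj
      (Rep.equivalenceModuleMonoidAlgebra.functor.obj (Rep.trivial ℤ G ℤ))).obj
    (Rep.equivalenceModuleMonoidAlgebra.functor.obj A)

open CategoryTheory.Limits

noncomputable section
namespace Stmt7
abbrev Grp (n : ℕ) := Multiplicative (ZMod n)
abbrev R (n : ℕ) : Type := MonoidAlgebra ℤ (Grp n)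
def sg (n : ℕ) : R n := MonoidAlgebra.of ℤ (Grp n) (Multiplicative.ofAdd (1 : ZMod n))
def cc (n q : ℕ) : R n := sg n - (q : R n)

lemma sg_pow_val [NeZero n] (g : Grp n) : sg n ^ (Multiplicative.toAdd g).val = MonoidAlgebra.of ℤ (Grp n) g := by
  rw [sg, ← map_pow]
  congr 1
  rw [← ofAdd_nsmul]
  rw [nsmul_eq_mul, mul_one]
  rw [ZMod.natCast_rightInverse _]
  exact ofAdd_toAdd g

lemma sg_pow_n [NeZero n] : sg n ^ n = 1 := by
  rw [sg, ← map_pow, ← ofAdd_nsmul, nsmul_eq_mul, mul_one, ZMod.natCast_self]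
  rfl

lemma cc_regular (hn : 1 ≤ n) (hq : 2 ≤ q) (f : R n) (h : cc n q * f = 0) : f = 0 := by
  have : NeZero n := ⟨by omega⟩
  have hsf : sg n * f = (q : R n) * f := by
    rw [cc, sub_mul, sub_eq_zero] at h
    exact h
  have hpow : ∀ k : ℕ, sg n ^ k * f = (q : R n) ^ k * f := by
    intro k
    induction k with
    | zero => simp
    | succ k ih =>
      rw [pow_succ, pow_succ, mul_assoc, hsf, ← mul_assoc, mul_comm (sg n ^ k) ((q : R n)),
        mul_assoc, ih, ← mul_assoc, mul_comm ((q : R n))]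
  have h2 := hpow n
  rw [sg_pow_n, one_mul] at h2
  have h3 : (((q : ℤ) ^ n - 1 : ℤ) : R n) * f = 0 := by
    push_cast
    rw [sub_mul, one_mul, ← h2, sub_self]
  have h4 : ((q : ℤ) ^ n - 1) • f = 0 := by rw [zsmul_eq_mul]; exact_mod_cast h3
  have hne : ((q : ℤ) ^ n - 1) ≠ 0 := by
    have h2n : (2:ℤ) ≤ (2:ℤ) ^ n := by
      calc (2:ℤ) = 2^1 := by norm_num
      _ ≤ 2^n := pow_le_pow_right₀ (by norm_num) hn
    have : (2:ℤ) ^ n ≤ (q:ℤ) ^ n := pow_le_pow_left₀ (by norm_num) (by exact_mod_cast hq) n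
    omega
  -- f is a Finsupp over ℤ
  ext a
  have h5 : ((q:ℤ)^n - 1) * f.coeff a = 0 := by
    have := congrArg (fun x => MonoidAlgebra.coeff x a) h4
    exact this
  have := mul_eq_zero.mp h5
  simp only [MonoidAlgebra.coeff_zero, Finsupp.coe_zero, Pi.zero_apply]
  tauto



variable {n q : ℕ}

lemma qpow_n (hn : 1 ≤ n) (hq : 2 ≤ q) : (q : ZMod (q^n-1)) ^ n = 1 := by
  have h1 : 1 ≤ q ^ n := Nat.one_le_pow _ _ (by omega)
  calc (q : ZMod (q^n-1)) ^ n = ((q^n : ℕ) : ZMod (q^n-1)) := by push_cast; ring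
  _ = (((q^n - 1) + 1 : ℕ) : ZMod (q^n-1)) := by rw [Nat.sub_add_cancel h1]
  _ = 1 := by push_cast [ZMod.natCast_self]; ring

lemma qpow_mod (hn : 1 ≤ n) (hq : 2 ≤ q) (k : ℕ) :
    (q : ZMod (q^n-1)) ^ (k % n) = (q : ZMod (q^n-1)) ^ k := by
  conv_rhs => rw [← Nat.div_add_mod k n]
  rw [pow_add, pow_mul, qpow_n hn hq, one_pow, one_mul]

variable (hn : 1 ≤ n) (hq : 2 ≤ q)
  (ρ : Representation ℤ (Grp n) (ZMod (q ^ n - 1)))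
  (hρ : ∀ (j : ZMod n) (x : ZMod (q ^ n - 1)),
      ρ (Multiplicative.ofAdd j) x = (q : ZMod (q ^ n - 1)) ^ j.val * x)

include hn hq hρ in
lemma asAlgebraHom_cc (x : ZMod (q^n-1)) : ρ.asAlgebraHom (cc n q) x = 0 := by
  have : NeZero n := ⟨by omega⟩
  rw [cc, map_sub, map_natCast, LinearMap.sub_apply, Module.End.natCast_apply,
    sg, Representation.asAlgebraHom_of, hρ]
  have hval : (1 : ZMod n).val = 1 % n := by rw [← Nat.cast_one, ZMod.val_natCast]
  rw [hval, qpow_mod hn hq, pow_one, nsmul_eq_mul, sub_self]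

include hn hq hρ in
lemma cc_smul (x : ρ.asModule) : (cc n q) • x = 0 := by
  apply ρ.asModuleEquiv.injective
  rw [Representation.asModuleEquiv_map_smul, asAlgebraHom_cc hn hq ρ hρ, map_zero]

end Stmt7

namespace Stmt7
open Stmt7

variable {n q : ℕ}

lemma one_le_m (hn : 1 ≤ n) (hq : 2 ≤ q) : 1 ≤ q ^ n - 1 := by
  have : 2 ^ n ≤ q ^ n := Nat.pow_le_pow_left hq n
  have : 2 ^ 1 ≤ 2 ^ n := Nat.pow_le_pow_right (by omega) hn
  omega

variable (hn : 1 ≤ n) (hq : 2 ≤ q)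
  (ρ : Representation ℤ (Grp n) (ZMod (q ^ n - 1)))
  (hρ : ∀ (j : ZMod n) (x : ZMod (q ^ n - 1)),
      ρ (Multiplicative.ofAdd j) x = (q : ZMod (q ^ n - 1)) ^ j.val * x)

def one_ : ρ.asModule := ρ.asModuleEquiv.symm 1

def φ : R n →ₗ[R n] ρ.asModule := LinearMap.toSpanSingleton (R n) ρ.asModule (one_ ρ)

lemma phi_intCast (z : ℤ) : ρ.asModuleEquiv (φ ρ ((z : R n))) = (z : ZMod (q^n-1)) := by
  rw [φ, LinearMap.toSpanSingleton_apply, Representation.asModuleEquiv_map_smul,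
    map_intCast, Module.End.intCast_apply, one_, LinearEquiv.apply_symm_apply,
    zsmul_eq_mul, mul_one]

include hn hq in
lemma phi_surjective : Function.Surjective (φ ρ) := by
  have : NeZero (q ^ n - 1) := ⟨by have := one_le_m hn hq; omega⟩
  intro x
  refine ⟨(((ρ.asModuleEquiv x).val : ℤ) : R n), ρ.asModuleEquiv.injective ?_⟩
  rw [phi_intCast]
  push_cast
  exact ZMod.natCast_rightInverse _

include hn in
lemma exists_int (f : R n) : ∃ z : ℤ, f - (z : R n) ∈ Ideal.span {cc n q} := by
  have : NeZero n := ⟨by omega⟩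
  induction f using MonoidAlgebra.induction_on with
  | of g =>
    refine ⟨(q:ℤ) ^ (Multiplicative.toAdd g).val, ?_⟩
    rw [← sg_pow_val g]
    push_cast
    exact Ideal.mem_span_singleton.2 (by simpa [cc] using sub_dvd_pow_sub_pow (sg n) ((q : R n)) (Multiplicative.toAdd g).val)
  | add f g hf hg =>
    obtain ⟨z1, h1⟩ := hf; obtain ⟨z2, h2⟩ := hg
    refine ⟨z1 + z2, ?_⟩
    have := Submodule.add_mem _ h1 h2
    convert this using 1
    push_cast; ring
  | smul r f hf =>
    obtain ⟨z, hz⟩ := hf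
    refine ⟨r * z, ?_⟩
    have := Ideal.mul_mem_left _ ((r : R n)) hz
    convert this using 1
    push_cast [zsmul_eq_mul]; ring

include hn hq in
lemma natCast_m_mem : ((q^n - 1 : ℕ) : R n) ∈ Ideal.span {cc n q} := by
  have : NeZero n := ⟨by omega⟩
  have h := Ideal.mem_span_singleton.2 (sub_dvd_pow_sub_pow (sg n) ((q : R n)) n)
  rw [sg_pow_n] at h
  have h2 : (q : R n)^n - 1 ∈ Ideal.span {sg n - (q : R n)} := by
    have := Submodule.neg_mem _ h
    simpa using this
  have h3 : ((q^n - 1 : ℕ) : R n) = (q : R n)^n - 1 := by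
    have h1 : 1 ≤ q ^ n := Nat.one_le_pow _ _ (by omega)
    push_cast [Nat.cast_sub h1]; ring
  rw [h3]; exact h2

include hn hq hρ in
lemma span_le_ker : ∀ g ∈ Ideal.span {cc n q}, φ ρ g = 0 := by
  intro g hg
  obtain ⟨a, rfl⟩ := Ideal.mem_span_singleton.1 hg
  rw [φ, LinearMap.toSpanSingleton_apply, mul_comm, mul_smul,
    cc_smul hn hq ρ hρ, smul_zero]

include hn hq hρ in
lemma ker_le_span (f : R n) (hf : φ ρ f = 0) : f ∈ Ideal.span {cc n q} := by
  have : NeZero (q ^ n - 1) := ⟨by have := one_le_m hn hq; omega⟩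
  obtain ⟨z, hz⟩ := exists_int hn f
  have h0 : φ ρ ((z : R n)) = 0 := by
    have h1 := span_le_ker hn hq ρ hρ _ hz
    rw [map_sub, hf, zero_sub, neg_eq_zero] at h1
    exact h1
  have hz0 : (z : ZMod (q^n-1)) = 0 := by
    rw [← phi_intCast ρ z, h0, map_zero]
  have hdvd : ((q^n-1 : ℕ) : ℤ) ∣ z := (ZMod.intCast_zmod_eq_zero_iff_dvd z (q^n-1)).1 hz0
  obtain ⟨w, hw⟩ := hdvd
  have hmem : ((z : ℤ) : R n) ∈ Ideal.span {cc n q} := by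
    rw [hw]; push_cast
    exact Ideal.mul_mem_right _ _ (natCast_m_mem hn hq)
  have : f = (f - (z : R n)) + (z : R n) := by ring
  rw [this]
  exact Submodule.add_mem _ hz hmem

end Stmt7

namespace Stmt7
variable {n q : ℕ}

variable (n q : ℕ)

def Cx : ChainComplex (ModuleCat (R n)) ℕ :=
  ChainComplex.of
    (fun i => match i with
      | 0 => ModuleCat.of (R n) (R n)
      | 1 => ModuleCat.of (R n) (R n)
      | _ + 2 => ModuleCat.of (R n) PUnit)
    (fun i => match i with
      | 0 => cc n q • 𝟙 (ModuleCat.of (R n) (R n))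
      | _ + 1 => 0)
    (fun i => match i with
      | 0 => by simp
      | _ + 1 => by simp)

lemma Cx_d_1_0 : (Cx n q).d 1 0 = cc n q • 𝟙 (ModuleCat.of (R n) (R n)) := by
  simp only [Cx]; exact ChainComplex.of_d _ _ 0

lemma Cx_d_succ (i : ℕ) : (Cx n q).d (i + 2) (i + 1) = 0 := by
  simp only [Cx]; exact ChainComplex.of_d _ _ (i + 1)

abbrev Quot' : ModuleCat (R n) := ModuleCat.of (R n) ((R n) ⧸ Ideal.span {cc n q})

variable {n q}

lemma mono_d (hn : 1 ≤ n) (hq : 2 ≤ q) :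
    Mono (cc n q • 𝟙 (ModuleCat.of (R n) (R n))) := by
  rw [ModuleCat.mono_iff_injective]
  intro a b hab
  have h2 : cc n q * (show R n from a) = cc n q * (show R n from b) := hab
  have h : cc n q * ((show R n from a) - (show R n from b)) = 0 := by
    rw [mul_sub, h2, sub_self]
  exact sub_eq_zero.mp (cc_regular hn hq _ h)

def presπ (n q : ℕ) : Cx n q ⟶ (ChainComplex.single₀ (ModuleCat (R n))).obj (Quot' n q) :=
  (ChainComplex.toSingle₀Equiv _ _).symm
    ⟨ModuleCat.ofHom (Ideal.span {cc n q}).mkQ, by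
      rw [Cx_d_1_0]
      ext
      refine (Submodule.Quotient.mk_eq_zero _).2 ?_
      exact Ideal.mem_span_singleton.2 ⟨1, rfl⟩⟩

lemma presπ_f_0 : (presπ n q).f 0 = ModuleCat.ofHom (Ideal.span {cc n q}).mkQ :=
  ChainComplex.toSingle₀Equiv_symm_apply_f_zero _ _

def pres (hn : 1 ≤ n) (hq : 2 ≤ q) : ProjectiveResolution (Quot' n q) where
  complex := Cx n q
  projective := by
    intro i
    match i with
    | 0 => exact ModuleCat.projective_of_free (M := ModuleCat.of (R n) (R n)) (Module.Basis.singleton PUnit.{1} (R n))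
    | 1 => exact ModuleCat.projective_of_free (M := ModuleCat.of (R n) (R n)) (Module.Basis.singleton PUnit.{1} (R n))
    | (i + 2) => exact (ModuleCat.isZero_of_subsingleton (ModuleCat.of (R n) PUnit)).projective
  π := presπ n q
  quasiIso := ⟨fun i => by
    cases i with
    | zero =>
      rw [ChainComplex.quasiIsoAt₀_iff, ShortComplex.quasiIso_iff_of_zeros']
      · refine ⟨?_, ?_⟩
        · rw [ShortComplex.moduleCat_exact_iff]
          intro x hx
          dsimp at x hx ⊢
          change (ConcreteCategory.hom ((presπ n q).f 0)) x = 0 at hx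
          rw [presπ_f_0] at hx
          obtain ⟨y, hy⟩ := Ideal.mem_span_singleton.1 ((Submodule.Quotient.mk_eq_zero _).1 hx)
          refine ⟨y, ?_⟩
          change ConcreteCategory.hom ((Cx n q).d 1 0) y = x
          rw [Cx_d_1_0, hy]
          rfl
        · change Epi ((presπ n q).f 0)
          rw [presπ_f_0]
          exact (ModuleCat.epi_iff_surjective _).2 (Submodule.mkQ_surjective _)
      · exact (Cx n q).shape 0 0 (by simp)
      · simp
        rfl
      · simp
        rfl
    | succ i =>
      rw [quasiIsoAt_iff_exactAt' _ _ (ChainComplex.exactAt_succ_single_obj _ _)]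
      rw [HomologicalComplex.exactAt_iff' _ (i + 2) (i + 1) i (by simp) (by simp)]
      match i with
      | 0 =>
        rw [ShortComplex.exact_iff_mono _ (by exact Cx_d_succ n q 0)]
        change Mono ((Cx n q).d 1 0)
        rw [Cx_d_1_0]
        exact mono_d hn hq
      | (i + 1) =>
        exact ShortComplex.exact_of_isZero_X₂ _ (ModuleCat.isZero_of_subsingleton (ModuleCat.of (R n) PUnit))⟩

section Trivial
variable {n q : ℕ}

lemma cc_smul_triv (hn : 1 ≤ n) (hq : 2 ≤ q)
    (x : (Rep.trivial ℤ (Grp n) ℤ).ρ.asModule) (hx : cc n q • x = 0) : x = 0 := by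
  apply (Rep.trivial ℤ (Grp n) ℤ).ρ.asModuleEquiv.injective
  rw [map_zero]
  have h1 : (Rep.trivial ℤ (Grp n) ℤ).ρ.asModuleEquiv (cc n q • x) = 0 := by
    rw [hx, map_zero]
  rw [Representation.asModuleEquiv_map_smul, cc, map_sub, map_natCast,
    LinearMap.sub_apply, Module.End.natCast_apply, sg,
    Representation.asAlgebraHom_of] at h1
  have h2 : (Rep.trivial ℤ (Grp n) ℤ).ρ (Multiplicative.ofAdd (1 : ZMod n))
      ((Rep.trivial ℤ (Grp n) ℤ).ρ.asModuleEquiv x) =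
      (Rep.trivial ℤ (Grp n) ℤ).ρ.asModuleEquiv x := Rep.trivial_ρ_apply _ _
  rw [h2] at h1
  have h1' : (show ℤ from (Rep.trivial ℤ (Grp n) ℤ).ρ.asModuleEquiv x) -
      q • (show ℤ from (Rep.trivial ℤ (Grp n) ℤ).ρ.asModuleEquiv x) = 0 := h1
  rw [nsmul_eq_mul] at h1'
  have hne : (1 - (q:ℤ)) ≠ 0 := by omega
  have h3 : (1 - (q:ℤ)) * (show ℤ from (Rep.trivial ℤ (Grp n) ℤ).ρ.asModuleEquiv x) = 0 := by
    linarith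
  exact (mul_eq_zero.1 h3).resolve_left hne

end Trivial
section MainCT
open MonoidalCategory
variable {n q : ℕ}

abbrev Xtriv (n : ℕ) : ModuleCat (R n) :=
  Rep.equivalenceModuleMonoidAlgebra.functor.obj (Rep.trivial ℤ (Grp n) ℤ)

abbrev F (n : ℕ) : ModuleCat (R n) ⥤ ModuleCat (R n) :=
  (tensoringLeft (ModuleCat (R n))).obj (Xtriv n)

lemma mono_F_d (hn : 1 ≤ n) (hq : 2 ≤ q) :
    Mono ((F n).map ((Cx n q).d 1 0)) := by
  erw [Cx_d_1_0, Functor.map_smul]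
  erw [show (F n).map (𝟙 (ModuleCat.of (R n) (R n))) = 𝟙 _ from CategoryTheory.Functor.map_id _ _]
  rw [ModuleCat.mono_iff_injective]
  intro a b hab
  have hab' : cc n q • a = cc n q • b := hab
  let e := ρ_ (Xtriv n)
  have h1 : e.hom (cc n q • a) = e.hom (cc n q • b) := by rw [hab']
  erw [map_smul, map_smul] at h1
  have h2 : cc n q • ((show (Rep.trivial ℤ (Grp n) ℤ).ρ.asModule from e.hom a) -
      (show (Rep.trivial ℤ (Grp n) ℤ).ρ.asModule from e.hom b)) = 0 := by
    rw [smul_sub]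
    exact sub_eq_zero.mpr h1
  have h3 := cc_smul_triv hn hq _ h2
  have h4 : e.hom a = e.hom b := sub_eq_zero.mp h3
  have hinj : Function.Injective e.hom := by
    rw [← ModuleCat.mono_iff_injective]
    infer_instance
  exact hinj h4

lemma isZero_homology_D (hn : 1 ≤ n) (hq : 2 ≤ q) (s : ℕ) (hs : 1 ≤ s) :
    IsZero ((((F n).mapHomologicalComplex (ComplexShape.down ℕ)).obj (Cx n q)).homology s) := by
  rw [← HomologicalComplex.exactAt_iff_isZero_homology]
  obtain ⟨t, rfl⟩ : ∃ t, s = t + 1 := ⟨s - 1, by omega⟩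
  rw [HomologicalComplex.exactAt_iff' _ (t+2) (t+1) t (by simp) (by simp)]
  match t with
  | 0 =>
    rw [ShortComplex.exact_iff_mono]
    · exact mono_F_d hn hq
    · show (F n).map ((Cx n q).d 2 1) = 0
      rw [Cx_d_succ]
      exact CategoryTheory.Functor.map_zero _ _ _
  | (t+1) =>
    exact ShortComplex.exact_of_isZero_X₂ _
      ((F n).map_isZero (ModuleCat.isZero_of_subsingleton (ModuleCat.of (R n) PUnit)))

end MainCT
end Stmt7

end
open Stmt7 in
theorem stmt_7 (n q : ℕ) (hn : 1 ≤ n) (hq : 2 ≤ q)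
    (ρ : Representation ℤ (Multiplicative (ZMod n)) (ZMod (q ^ n - 1)))
    (hρ : ∀ (j : ZMod n) (x : ZMod (q ^ n - 1)),
      ρ (Multiplicative.ofAdd j) x = (q : ZMod (q ^ n - 1)) ^ j.val * x)
    (s : ℕ) (hs : 1 ≤ s) :
    CategoryTheory.Limits.IsZero (groupHomology' (Rep.of ρ) s) := by
  have hle : Ideal.span {cc n q} ≤ LinearMap.ker (φ ρ) := fun g hg =>
    LinearMap.mem_ker.2 (span_le_ker hn hq ρ hρ g hg)
  have hker : LinearMap.ker (Submodule.liftQ (Ideal.span {cc n q}) (φ ρ) hle) = ⊥ :=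
    Submodule.ker_liftQ_eq_bot _ _ _
      (fun f hf => ker_le_span hn hq ρ hρ f (LinearMap.mem_ker.1 hf))
  have hsurj : Function.Surjective (Submodule.liftQ (Ideal.span {cc n q}) (φ ρ) hle) := by
    intro x
    obtain ⟨r, hr⟩ := phi_surjective hn hq ρ x
    exact ⟨Submodule.Quotient.mk r, by rw [Submodule.liftQ_apply]; exact hr⟩
  let e : ((R n) ⧸ Ideal.span {cc n q}) ≃ₗ[R n] ρ.asModule :=
    LinearEquiv.ofBijective _ ⟨LinearMap.ker_eq_bot.1 hker, hsurj⟩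
  let isoQM : Quot' n q ≅ Rep.equivalenceModuleMonoidAlgebra.functor.obj (Rep.of ρ) :=
    e.toModuleIso
  have hiso : groupHomology' (Rep.of ρ) s ≅
      (((F n).mapHomologicalComplex (ComplexShape.down ℕ)).obj (Cx n q)).homology s :=
    (((Tor (ModuleCat (MonoidAlgebra ℤ (Multiplicative (ZMod n)))) s).obj
        (Xtriv n)).mapIso isoQM.symm) ≪≫
      ((pres hn hq).isoLeftDerivedObj (F n) s)
  exact (isZero_homology_D hn hq s hs).of_iso hiso
end

section
/- Let n ≥ 1 and q ≥ 2 be integers. Let G be the cyclic group Multiplicative (ZMod n), and let ρ be the ℤ-linear representation of G on ZMod (q^n − 1) under which Multiplicative.ofAdd j acts by multiplication by q^(j.val). Then the zeroth group cohomology H^0(G; ρ) (equivalently, the invariants of ρ) and the zeroth group homology H_0(G; ρ) (equivalently, the coinvariants of ρ) are both isomorphic as abelian groups to ZMod (q − 1); explicitly, the invariants form the cyclic subgroup of ZMod (q^n − 1) generated by the image of the integer (q^n − 1)/(q − 1). -/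
private theorem stmt8_aux (n q m d s : ℕ) (hn : 1 ≤ n) (hq : 2 ≤ q)
    (hm_def : m = q ^ n - 1) (hd_def : d = q - 1) (hs_def : s = m / d)
    (ρ : Representation ℤ (Multiplicative (ZMod n)) (ZMod m))
    (hρ : ∀ (j : ZMod n) (x : ZMod m),
      ρ (Multiplicative.ofAdd j) x = (q : ZMod m) ^ j.val * x) :
    Nonempty (ρ.invariants ≃+ ZMod d) ∧
    Nonempty ((ZMod m ⧸
        Submodule.span ℤ (Set.range
          fun p : Multiplicative (ZMod n) × ZMod m => p.2 - ρ p.1 p.2)) ≃+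
      ZMod d) ∧
    (ρ.invariants : Set (ZMod m))
      = (AddSubgroup.zmultiples ((s : ℕ) : ZMod m) : Set (ZMod m)) := by
  have hq2n : 2 ≤ q ^ n := le_trans hq (by simpa using Nat.pow_le_pow_right (by omega) hn)
  have hm1 : m + 1 = q ^ n := by omega
  haveI : NeZero m := ⟨by omega⟩
  haveI : NeZero d := ⟨by omega⟩
  have hdvd : d ∣ m := by simpa [hm_def, hd_def] using Nat.sub_dvd_pow_sub_pow q 1 n
  have hds : d * s = m := by rw [hs_def]; exact Nat.mul_div_cancel' hdvd
  have hs0 : s ≠ 0 := by intro h; rw [h, Nat.mul_zero] at hds; omega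
  have hqmn : (q : ZMod m) ^ n = 1 := by
    have : ((q ^ n : ℕ) : ZMod m) = ((m + 1 : ℕ) : ZMod m) := by rw [hm1]
    rw [Nat.cast_pow] at this
    rw [this]; push_cast; simp [ZMod.natCast_self]
  have hq1 : (q : ZMod m) ^ (1 : ZMod n).val = (q : ZMod m) := by
    rw [ZMod.val_one_eq_one_mod, ← pow_eq_pow_mod 1 hqmn, pow_one]
  have hcast_d : ((d : ℕ) : ZMod m) = (q : ZMod m) - 1 := by
    rw [hd_def, Nat.cast_sub (by omega : 1 ≤ q), Nat.cast_one]
  -- characterization of invariants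
  have hinv : ∀ x : ZMod m, x ∈ ρ.invariants ↔ ((d : ℕ) : ZMod m) * x = 0 := by
    intro x
    rw [Representation.mem_invariants]
    constructor
    · intro hx
      have h1 := hx (Multiplicative.ofAdd (1 : ZMod n))
      rw [hρ, hq1] at h1
      rw [hcast_d, sub_mul, one_mul, sub_eq_zero, h1]
    · intro hx g
      have hqx : (q : ZMod m) * x = x := by
        rw [hcast_d, sub_mul, one_mul, sub_eq_zero] at hx
        exact hx
      have key : ∀ k : ℕ, (q : ZMod m) ^ k * x = x := by
        intro k; induction k with
        | zero => simp
        | succ k ih => rw [pow_succ, mul_assoc, hqx, ih]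
      have : g = Multiplicative.ofAdd (Multiplicative.toAdd g) := rfl
      rw [this, hρ]; exact key _
  -- kernel of mult-by-d equals zmultiples s
  have hker : ∀ x : ZMod m, ((d : ℕ) : ZMod m) * x = 0 ↔
      x ∈ AddSubgroup.zmultiples ((s : ℕ) : ZMod m) := by
    intro x
    constructor
    · intro hx
      have hx' : ((d * x.val : ℕ) : ZMod m) = 0 := by
        push_cast
        rw [ZMod.natCast_zmod_val]; exact hx
      have hdvd2 : m ∣ d * x.val := (ZMod.natCast_eq_zero_iff _ _).mp hx'
      have hsx : s ∣ x.val := by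
        have h2 : d * s ∣ d * x.val := by rw [hds]; exact hdvd2
        exact (Nat.mul_dvd_mul_iff_left (by omega : 0 < d)).mp h2
      obtain ⟨t, ht⟩ := hsx
      rw [AddSubgroup.mem_zmultiples_iff]
      refine ⟨(t : ℤ), ?_⟩
      rw [zsmul_eq_mul]
      push_cast
      rw [mul_comm, ← Nat.cast_mul, ← ht, ZMod.natCast_zmod_val]
    · intro hx
      rw [AddSubgroup.mem_zmultiples_iff] at hx
      obtain ⟨k, rfl⟩ := hx
      rw [mul_smul_comm, ← Nat.cast_mul, hds, ZMod.natCast_self, smul_zero]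
  have hset : (ρ.invariants : Set (ZMod m)) =
      (AddSubgroup.zmultiples ((s : ℕ) : ZMod m) : Set (ZMod m)) := by
    ext x
    simp only [SetLike.mem_coe]
    exact (hinv x).trans (hker x)
  -- the cast ring hom
  set f := ZMod.castHom hdvd (ZMod d) with hf_def
  have hqd : (q : ZMod d) = 1 := by
    have h1 : q = d + 1 := by omega
    rw [h1]; push_cast; simp [ZMod.natCast_self]
  -- coinvariants
  set N := Submodule.span ℤ (Set.range
      fun p : Multiplicative (ZMod n) × ZMod m => p.2 - ρ p.1 p.2) with hN_def
  set fl := f.toAddMonoidHom.toIntLinearMap with hfl_def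
  have hflx : ∀ x : ZMod m, fl x = f x := fun _ => rfl
  have hgen : ∀ y : ZMod m, ((d : ℕ) : ZMod m) * y ∈ N := by
    intro y
    have hmem : y - ρ (Multiplicative.ofAdd (1 : ZMod n)) y ∈ N := by
      exact Submodule.subset_span ⟨(Multiplicative.ofAdd (1 : ZMod n), y), rfl⟩
    rw [hρ, hq1] at hmem
    have heq : ((d : ℕ) : ZMod m) * y = -(y - (q : ZMod m) * y) := by
      rw [hcast_d]; ring
    rw [heq]; exact neg_mem hmem
  have hNker : N = LinearMap.ker fl := by
    apply le_antisymm
    · rw [Submodule.span_le]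
      rintro _ ⟨⟨g, x⟩, rfl⟩
      simp only [SetLike.mem_coe, LinearMap.mem_ker]
      have : g = Multiplicative.ofAdd (Multiplicative.toAdd g) := rfl
      rw [this, hρ, hflx, map_sub, map_mul, map_pow, map_natCast, hqd, one_pow, one_mul,
        sub_self]
    · intro x hx
      have hx0 : ((x.val : ℕ) : ZMod d) = 0 := by
        have h1 : fl x = 0 := hx
        rw [hflx, ZMod.castHom_apply] at h1
        rw [ZMod.natCast_val]; exact h1
      have hdx : d ∣ x.val := (ZMod.natCast_eq_zero_iff _ _).mp hx0
      obtain ⟨t, ht⟩ := hdx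
      have hxt : x = ((d : ℕ) : ZMod m) * ((t : ℕ) : ZMod m) := by
        rw [← Nat.cast_mul, ← ht, ZMod.natCast_zmod_val]
      rw [hxt]; exact hgen _
  have hsurj : Function.Surjective fl := by
    intro y
    refine ⟨((y.val : ℕ) : ZMod m), ?_⟩
    rw [hflx, map_natCast, ZMod.natCast_zmod_val]
  have ecoinv : (ZMod m ⧸ N) ≃ₗ[ℤ] ZMod d :=
    (Submodule.quotEquivOfEq _ _ hNker).trans (fl.quotKerEquivOfSurjective hsurj)
  -- the map g : ZMod d →+ ZMod m sending 1 to s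
  have hfZ : (zmultiplesHom (ZMod m) ((s : ℕ) : ZMod m)) ((d : ℕ) : ℤ) = 0 := by
    show ((d : ℕ) : ℤ) • ((s : ℕ) : ZMod m) = 0
    rw [zsmul_eq_mul]
    push_cast
    rw [← Nat.cast_mul, hds, ZMod.natCast_self]
  set g : ZMod d →+ ZMod m := ZMod.lift d ⟨zmultiplesHom (ZMod m) ((s : ℕ) : ZMod m), hfZ⟩
    with hg_def
  have hg1 : ∀ k : ℤ, g ((k : ℤ) : ZMod d) = k • ((s : ℕ) : ZMod m) := by
    intro k
    rw [hg_def, ZMod.lift_coe]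
    rfl
  have hginj : Function.Injective g := by
    rw [injective_iff_map_eq_zero]
    intro a ha
    have hav : a = (((a.val : ℕ) : ℤ) : ZMod d) := by
      push_cast
      rw [ZMod.natCast_zmod_val]
    rw [hav, hg1] at ha
    have ha' : ((a.val * s : ℕ) : ZMod m) = 0 := by
      push_cast
      rw [← ha, zsmul_eq_mul]
      push_cast
      ring
    have hm_dvd : m ∣ a.val * s := (ZMod.natCast_eq_zero_iff _ _).mp ha'
    have hda : d ∣ a.val := by
      have h2 : s * d ∣ s * a.val := by
        rw [Nat.mul_comm s d, hds, Nat.mul_comm s a.val] at *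
        exact hm_dvd
      exact (Nat.mul_dvd_mul_iff_left (by omega : 0 < s)).mp h2
    have hlt : a.val < d := ZMod.val_lt a
    have hval0 : a.val = 0 := by
      rcases hda with ⟨c, hc⟩
      rcases Nat.eq_zero_or_pos c with h | h
      · rw [h, Nat.mul_zero] at hc; exact hc
      · have hdc : d * 1 ≤ d * c := Nat.mul_le_mul_left d h
        omega
    rw [hav, hval0]; simp
  have hrange : g.range = ρ.invariants.toAddSubgroup := by
    ext x
    rw [Submodule.mem_toAddSubgroup, hinv x, hker x]
    constructor
    · rintro ⟨a, rfl⟩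
      have hav : a = (((a.val : ℕ) : ℤ) : ZMod d) := by
        push_cast
        rw [ZMod.natCast_zmod_val]
      rw [hav, hg1]
      exact AddSubgroup.mem_zmultiples_iff.mpr ⟨(a.val : ℤ), rfl⟩
    · intro hx
      obtain ⟨k, rfl⟩ := AddSubgroup.mem_zmultiples_iff.mp hx
      exact ⟨((k : ℤ) : ZMod d), hg1 k⟩
  have einv : ZMod d ≃+ ρ.invariants.toAddSubgroup :=
    (AddMonoidHom.ofInjective hginj).trans (AddEquiv.addSubgroupCongr hrange)
  exact ⟨⟨einv.symm⟩, ⟨ecoinv.toAddEquiv⟩, hset⟩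

/-- Let `n ≥ 1`, `q ≥ 2`, `G = Multiplicative (ZMod n)`, and let `ρ`
be the ℤ-linear representation of `G` on `ZMod (q^n - 1)` where `Multiplicative.ofAdd j`
acts by multiplication by `q ^ j.val`.  Then the invariants of `ρ` (i.e. `H^0(G; ρ)`)
and the coinvariants of `ρ` (i.e. `H_0(G; ρ)`) are both isomorphic, as abelian groups,
to `ZMod (q - 1)`; explicitly, the invariants form the cyclic subgroup of
`ZMod (q^n - 1)` generated by the image of the integer `(q^n - 1)/(q - 1)`. -/
theorem stmt_8 (n q : ℕ) (hn : 1 ≤ n) (hq : 2 ≤ q)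
    (ρ : Representation ℤ (Multiplicative (ZMod n)) (ZMod (q ^ n - 1)))
    (hρ : ∀ (j : ZMod n) (x : ZMod (q ^ n - 1)),
      ρ (Multiplicative.ofAdd j) x = (q : ZMod (q ^ n - 1)) ^ j.val * x) :
    Nonempty (ρ.invariants ≃+ ZMod (q - 1)) ∧
    Nonempty ((ZMod (q ^ n - 1) ⧸
        Submodule.span ℤ (Set.range
          fun p : Multiplicative (ZMod n) × ZMod (q ^ n - 1) => p.2 - ρ p.1 p.2)) ≃+
      ZMod (q - 1)) ∧
    (ρ.invariants : Set (ZMod (q ^ n - 1)))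
      = (AddSubgroup.zmultiples ((((q ^ n - 1) / (q - 1) : ℕ)) : ZMod (q ^ n - 1)) :
          Set (ZMod (q ^ n - 1))) :=
  stmt8_aux n q (q ^ n - 1) (q - 1) ((q ^ n - 1) / (q - 1)) hn hq rfl rfl rfl ρ hρ
end

section
/- Let q ≥ 2 be an integer and let n be a positive even integer. Let G be the cyclic group Multiplicative (ZMod n), and let ρ be the ℤ-linear representation of G on ZMod (q^n − 1) under which Multiplicative.ofAdd j acts by multiplication by (−q)^(j.val). Then the group homology of G with coefficients in ρ vanishes in all positive degrees: H_s(G; ρ) ≅ 0 for every s ≥ 1. -/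
open CategoryTheory



open CategoryTheory CategoryTheory.Limits
open ZeroObject

namespace Stmt10Aux

lemma projective_of_isZero {C : Type*} [Category C] [HasZeroMorphisms C] {X : C}
    (h : IsZero X) : Projective X where
  factors f e _ := ⟨0, by rw [zero_comp]; exact h.eq_of_src 0 f⟩

section

variable {R : Type} [CommRing R] (c : R) (M : ModuleCat.{0} R) (x₀ : M)

noncomputable def Xf : ℕ → ModuleCat.{0} R
  | 0 => ModuleCat.of R R
  | 1 => ModuleCat.of R R
  | _ + 2 => 0

noncomputable def df : ∀ k : ℕ, Xf (R := R) (k + 1) ⟶ Xf k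
  | 0 => ModuleCat.ofHom (LinearMap.toSpanSingleton R R c)
  | _ + 1 => 0

noncomputable def cx : ChainComplex (ModuleCat.{0} R) ℕ :=
  ChainComplex.of (Xf (R := R)) (df c)
    (fun n => by rw [show df c (n + 1) = 0 from rfl, zero_comp])

lemma cx_d10 : (cx c).d 1 0 = ModuleCat.ofHom (LinearMap.toSpanSingleton R R c) :=
  ChainComplex.of_d (Xf (R := R)) (df c) 0

noncomputable def resπ (h4 : c • x₀ = 0) :
    cx c ⟶ (ChainComplex.single₀ (ModuleCat.{0} R)).obj M :=
  (ChainComplex.toSingle₀Equiv _ _).symm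
    ⟨ModuleCat.ofHom (LinearMap.toSpanSingleton R M x₀), by
      rw [show (cx c).d 1 0 = df c 0 from ChainComplex.of_d (Xf (R := R)) (df c) 0]
      refine ModuleCat.hom_ext (LinearMap.ext fun (r : R) => ?_)
      show LinearMap.toSpanSingleton R M x₀ ((LinearMap.toSpanSingleton R R c) r) = 0
      simp only [LinearMap.toSpanSingleton_apply, smul_eq_mul, mul_smul]
      rw [h4, smul_zero]⟩


variable (h1 : ∀ r : R, r * c = 0 → r = 0)
  (h2 : ∀ x : M, ∃ r : R, r • x₀ = x)
  (h3 : ∀ r : R, r • x₀ = 0 → ∃ w : R, w * c = r)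
  (h4 : c • x₀ = 0)

noncomputable def res : ProjectiveResolution M where
  complex := cx c
  projective n := by
    match n with
    | 0 => exact ModuleCat.projective_of_free (Module.Basis.singleton PUnit.{1} R)
    | 1 => exact ModuleCat.projective_of_free (Module.Basis.singleton PUnit.{1} R)
    | (n + 2) => exact projective_of_isZero (isZero_zero _)
  π := resπ c M x₀ h4
  quasiIso := ⟨fun k => by
    cases k with
    | zero =>
      rw [ChainComplex.quasiIsoAt₀_iff, ShortComplex.quasiIso_iff_of_zeros']
      · constructor
        · rw [ShortComplex.moduleCat_exact_iff]
          intro x hx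
          have hx' : (show R from x) • x₀ = 0 := by
            have h : (resπ c M x₀ h4).f 0 x = 0 := hx
            change (show R from x) • x₀ = 0 at h
            exact h
          obtain ⟨w, hw⟩ := h3 x hx'
          refine ⟨w, ?_⟩
          show (cx c).d 1 0 w = x
          have hd : (cx c).d 1 0 = ModuleCat.ofHom (LinearMap.toSpanSingleton R R c) :=
            ChainComplex.of_d (Xf (R := R)) (df c) 0
          rw [hd]
          exact hw
        · show Epi ((resπ c M x₀ h4).f 0)
          change Epi (ModuleCat.ofHom (LinearMap.toSpanSingleton R M x₀))
          rw [ModuleCat.epi_iff_surjective]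
          intro x
          obtain ⟨r, hr⟩ := h2 x
          exact ⟨r, hr⟩
      all_goals rfl
    | succ k =>
      rw [quasiIsoAt_iff_exactAt' _ _ (ChainComplex.exactAt_succ_single_obj _ _)]
      rw [HomologicalComplex.exactAt_iff' _ (k+2) (k+1) k (by simp) (by simp)]
      cases k with
      | zero =>
        rw [ShortComplex.moduleCat_exact_iff]
        intro x hx
        have h : (cx c).d 1 0 x = 0 := hx
        have hd : (cx c).d 1 0 = ModuleCat.ofHom (LinearMap.toSpanSingleton R R c) :=
          ChainComplex.of_d (Xf (R := R)) (df c) 0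
        rw [hd] at h
        have hx0 : x = 0 := h1 x h
        refine ⟨0, ?_⟩
        rw [hx0]
        exact map_zero _
      | succ k =>
        exact ShortComplex.exact_of_isZero_X₂ _ (isZero_zero _)⟩


open MonoidalCategory in
theorem isZero_Tor (h1 : ∀ r : R, r * c = 0 → r = 0)
    (h2 : ∀ x : M, ∃ r : R, r • x₀ = x)
    (h3 : ∀ r : R, r • x₀ = 0 → ∃ w : R, w * c = r)
    (h4 : c • x₀ = 0) (X : ModuleCat.{0} R)
    (h5 : ∀ z : X, c • z = 0 → z = 0) (s : ℕ) (hs : 1 ≤ s) :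
    IsZero (((Tor (ModuleCat.{0} R) s).obj X).obj M) := by
  obtain ⟨k, rfl⟩ : ∃ k, s = k + 1 := ⟨s - 1, (Nat.succ_pred_eq_of_pos hs).symm⟩
  let F := (tensoringLeft (ModuleCat.{0} R)).obj X
  let P := res c M x₀ h1 h2 h3 h4
  refine IsZero.of_iso ?_ (P.isoLeftDerivedObj F (k+1))
  show IsZero (((F.mapHomologicalComplex _).obj P.complex).homology (k+1))
  rw [← HomologicalComplex.exactAt_iff_isZero_homology]
  rw [HomologicalComplex.exactAt_iff' _ (k+2) (k+1) k (by simp) (by simp)]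
  cases k with
  | zero =>
    rw [ShortComplex.moduleCat_exact_iff]
    intro x hx
    refine ⟨0, ?_⟩
    have hd : ((F.mapHomologicalComplex _).obj P.complex).d 1 0
        = (X ◁ ModuleCat.ofHom (LinearMap.toSpanSingleton R R c)) := by
      have hd0 : (P.complex).d 1 0 = ModuleCat.ofHom (LinearMap.toSpanSingleton R R c) :=
        cx_d10 c
      simp only [Functor.mapHomologicalComplex_obj_d, hd0]
      rfl
    have hx' : (X ◁ ModuleCat.ofHom (LinearMap.toSpanSingleton R R c)) x = 0 := by
      rw [← hd]; exact hx
    have key : ∀ z : ↑(tensorObj X (ModuleCat.of R R)),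
        (TensorProduct.rid R X) ((X ◁ ModuleCat.ofHom (LinearMap.toSpanSingleton R R c)) z)
          = c • (TensorProduct.rid R X) z := by
      intro z
      induction z using TensorProduct.induction_on with
      | zero => simp
      | tmul a b =>
        rw [ModuleCat.MonoidalCategory.whiskerLeft_apply]
        simp [TensorProduct.rid_tmul, smul_smul, mul_comm]
      | add u v hu hv =>
        rw [map_add, map_add, map_add, hu, hv, smul_add]
    have hx0 : x = 0 := by
      have hk := key x
      rw [hx', map_zero] at hk
      have h0 : (TensorProduct.rid R X) x = 0 := h5 _ hk.symm
      have := congrArg (TensorProduct.rid R X).symm h0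
      exact (TensorProduct.rid R X).injective (h0.trans (map_zero _).symm)
    rw [hx0]
    exact map_zero _
  | succ k =>
    exact ShortComplex.exact_of_isZero_X₂ _ (F.map_isZero (isZero_zero _))

end

end Stmt10Aux


open Stmt10Aux

/-- Let `q ≥ 2`, `n > 0` even, `G = Multiplicative (ZMod n)`, and let
`ρ` be the ℤ-linear representation of `G` on `ZMod (q^n - 1)` where
`Multiplicative.ofAdd j` acts by multiplication by `(-q) ^ j.val`.  Then the group
homology `H_s(G; ρ)` vanishes for all `s ≥ 1`. -/
theorem stmt_10 (n q : ℕ) (hn : 0 < n) (hne : Even n) (hq : 2 ≤ q)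
    (ρ : Representation ℤ (Multiplicative (ZMod n)) (ZMod (q ^ n - 1)))
    (hρ : ∀ (j : ZMod n) (x : ZMod (q ^ n - 1)),
      ρ (Multiplicative.ofAdd j) x = (((-q : ℤ) ^ j.val : ℤ) : ZMod (q ^ n - 1)) * x)
    (s : ℕ) (hs : 1 ≤ s) :
    CategoryTheory.Limits.IsZero (groupHomology' (Rep.of ρ) s) := by
  classical
  haveI : NeZero n := ⟨hn.ne'⟩
  have hn2 : 2 ≤ n := by obtain ⟨j, rfl⟩ := hne; omega
  haveI : Fact (1 < n) := ⟨hn2⟩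
  have hqn : 2 ≤ q ^ n := by
    calc 2 = 2 ^ 1 := rfl
    _ ≤ 2 ^ n := Nat.pow_le_pow_right (by norm_num) (by omega)
    _ ≤ q ^ n := Nat.pow_le_pow_left hq n
  haveI : NeZero (q ^ n - 1) := ⟨by omega⟩
  have hmcast : ((q ^ n - 1 : ℕ) : ℤ) = (q : ℤ) ^ n - 1 := by
    push_cast [Nat.cast_sub (by omega : 1 ≤ q ^ n)]; ring
  set t : ZMod (q ^ n - 1) := ((((-q : ℤ)) : ℤ) : ZMod (q ^ n - 1)) with htdef
  have ht : t ^ n = 1 := by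
    rw [htdef, ← Int.cast_pow, Even.neg_pow hne]
    have e2 : ((q : ℤ) ^ n : ℤ) = ((q ^ n - 1 : ℕ) : ℤ) + 1 := by rw [hmcast]; ring
    rw [e2]
    push_cast [ZMod.natCast_self]
    ring
  set χ : Multiplicative (ZMod n) →* ZMod (q ^ n - 1) :=
    { toFun := fun g => t ^ (Multiplicative.toAdd g).val
      map_one' := by
        show t ^ (0 : ZMod n).val = 1
        rw [ZMod.val_zero, pow_zero]
      map_mul' := fun g h => by
        show t ^ (Multiplicative.toAdd g + Multiplicative.toAdd h).val = _
        rw [ZMod.val_add, ← pow_eq_pow_mod _ ht, pow_add] } with hχ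
  set e : MonoidAlgebra ℤ (Multiplicative (ZMod n)) →ₐ[ℤ] ZMod (q ^ n - 1) :=
    (MonoidAlgebra.lift ℤ (ZMod (q ^ n - 1)) (Multiplicative (ZMod n))) χ with he
  set σ : MonoidAlgebra ℤ (Multiplicative (ZMod n)) :=
    MonoidAlgebra.of ℤ (Multiplicative (ZMod n)) (Multiplicative.ofAdd (1 : ZMod n)) with hσ
  set c : MonoidAlgebra ℤ (Multiplicative (ZMod n)) :=
    σ + (q : MonoidAlgebra ℤ (Multiplicative (ZMod n))) with hc
  -- basic facts
  have hσ_pow : ∀ g : Multiplicative (ZMod n),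
      MonoidAlgebra.of ℤ (Multiplicative (ZMod n)) g = σ ^ (Multiplicative.toAdd g).val := by
    intro g
    rw [hσ, ← map_pow, ← ofAdd_nsmul]
    congr 1
    show g = Multiplicative.ofAdd ((Multiplicative.toAdd g).val • (1 : ZMod n))
    rw [nsmul_eq_mul, mul_one, ZMod.natCast_rightInverse (Multiplicative.toAdd g)]
    rfl
  have hσn : σ ^ n = 1 := by
    rw [hσ, ← map_pow, ← ofAdd_nsmul]
    have hzero : n • (1 : ZMod n) = 0 := by
      rw [nsmul_eq_mul, mul_one, ZMod.natCast_self]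
    rw [hzero]
    rfl
  have hdvd_geom : ∀ (x y : MonoidAlgebra ℤ (Multiplicative (ZMod n))) (k : ℕ),
      (x - y) ∣ (x ^ k - y ^ k) := fun x y k =>
    ⟨∑ i ∈ Finset.range k, x ^ i * y ^ (k - 1 - i), by rw [← geom_sum₂_mul x y k, mul_comm]⟩
  have hcσ : σ - ((((-q : ℤ)) : ℤ) : MonoidAlgebra ℤ (Multiplicative (ZMod n))) = c := by
    rw [hc]; push_cast; ring
  have hcpow : ∀ k : ℕ,
      c ∣ (σ ^ k - ((((-q : ℤ)) : ℤ) : MonoidAlgebra ℤ (Multiplicative (ZMod n))) ^ k) := by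
    intro k
    rw [← hcσ]
    exact hdvd_geom σ _ k
  have hm_dvd : c ∣ ((q ^ n - 1 : ℕ) : MonoidAlgebra ℤ (Multiplicative (ZMod n))) := by
    have h1 := hdvd_geom (q : MonoidAlgebra ℤ (Multiplicative (ZMod n))) (-σ) n
    have hcq : (q : MonoidAlgebra ℤ (Multiplicative (ZMod n))) - (-σ) = c := by rw [hc]; ring
    have h2 : (q : MonoidAlgebra ℤ (Multiplicative (ZMod n))) ^ n - (-σ) ^ n
        = ((q ^ n - 1 : ℕ) : MonoidAlgebra ℤ (Multiplicative (ZMod n))) := by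
      rw [Even.neg_pow hne, hσn]
      push_cast [Nat.cast_sub (by omega : 1 ≤ q ^ n)]
      ring
    rw [hcq, h2] at h1
    exact h1
  -- evaluations
  have he_of : ∀ g : Multiplicative (ZMod n),
      e (MonoidAlgebra.of ℤ (Multiplicative (ZMod n)) g) = t ^ (Multiplicative.toAdd g).val := by
    intro g
    rw [he, MonoidAlgebra.lift_of]
    rfl
  have he_c : e c = 0 := by
    rw [hc, map_add, map_natCast, hσ, he_of]
    show t ^ (1 : ZMod n).val + (q : ZMod (q ^ n - 1)) = 0
    rw [ZMod.val_one, pow_one, htdef]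
    push_cast
    ring
  -- kernel of e
  have hker : ∀ r : MonoidAlgebra ℤ (Multiplicative (ZMod n)), e r = 0 → c ∣ r := by
    have key : ∀ r : MonoidAlgebra ℤ (Multiplicative (ZMod n)), ∃ k : ℤ,
        ((k : ZMod (q ^ n - 1)) = e r) ∧
        c ∣ (r - ((k : ℤ) : MonoidAlgebra ℤ (Multiplicative (ZMod n)))) := by
      intro r
      induction r using MonoidAlgebra.induction_on with
      | of g =>
        refine ⟨(-(q : ℤ)) ^ (Multiplicative.toAdd g).val, ?_, ?_⟩
        · rw [he_of, htdef, ← Int.cast_pow]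
        · rw [hσ_pow g]
          have hcast : (((-(q : ℤ)) ^ (Multiplicative.toAdd g).val : ℤ)
                : MonoidAlgebra ℤ (Multiplicative (ZMod n)))
              = ((((-q : ℤ)) : ℤ) : MonoidAlgebra ℤ (Multiplicative (ZMod n)))
                  ^ (Multiplicative.toAdd g).val := by push_cast; ring
          rw [hcast]
          exact hcpow _
      | add f g hf hg =>
        obtain ⟨k1, hk1, hd1⟩ := hf
        obtain ⟨k2, hk2, hd2⟩ := hg
        refine ⟨k1 + k2, ?_, ?_⟩
        · rw [map_add, ← hk1, ← hk2]; push_cast; ring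
        · have hsplit : f + g - ((k1 + k2 : ℤ) : MonoidAlgebra ℤ (Multiplicative (ZMod n)))
              = (f - ((k1 : ℤ) : MonoidAlgebra ℤ (Multiplicative (ZMod n))))
                + (g - ((k2 : ℤ) : MonoidAlgebra ℤ (Multiplicative (ZMod n)))) := by
            push_cast; ring
          rw [hsplit]
          exact dvd_add hd1 hd2
      | smul a f hf =>
        obtain ⟨k, hk, hd⟩ := hf
        have hsf : a • f = ((a : ℤ) : MonoidAlgebra ℤ (Multiplicative (ZMod n))) * f :=
          zsmul_eq_mul f a
        refine ⟨a * k, ?_, ?_⟩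
        · rw [hsf, map_mul, map_intCast, ← hk]; push_cast; ring
        · have hsplit : a • f - ((a * k : ℤ) : MonoidAlgebra ℤ (Multiplicative (ZMod n)))
              = ((a : ℤ) : MonoidAlgebra ℤ (Multiplicative (ZMod n)))
                * (f - ((k : ℤ) : MonoidAlgebra ℤ (Multiplicative (ZMod n)))) := by
            rw [hsf]; push_cast; ring
          rw [hsplit]
          exact hd.mul_left _
    intro r hr
    obtain ⟨k, hk, hd⟩ := key r
    rw [hr] at hk
    obtain ⟨j, rfl⟩ := (ZMod.intCast_zmod_eq_zero_iff_dvd k (q ^ n - 1)).mp hk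
    have hkR : ((((q ^ n - 1 : ℕ) : ℤ) * j : ℤ) : MonoidAlgebra ℤ (Multiplicative (ZMod n)))
        = ((q ^ n - 1 : ℕ) : MonoidAlgebra ℤ (Multiplicative (ZMod n)))
          * ((j : ℤ) : MonoidAlgebra ℤ (Multiplicative (ZMod n))) := by push_cast; ring
    have hdk : c ∣ ((((q ^ n - 1 : ℕ) : ℤ) * j : ℤ) : MonoidAlgebra ℤ (Multiplicative (ZMod n))) := by
      rw [hkR]
      exact hm_dvd.mul_right _
    have hsum : r = (r - ((((q ^ n - 1 : ℕ) : ℤ) * j : ℤ) : MonoidAlgebra ℤ (Multiplicative (ZMod n))))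
        + ((((q ^ n - 1 : ℕ) : ℤ) * j : ℤ) : MonoidAlgebra ℤ (Multiplicative (ZMod n))) := by ring
    rw [hsum]
    exact dvd_add hd hdk
  -- module structure facts
  have hAlg : ρ.asAlgebraHom = (Algebra.lmul ℤ (ZMod (q ^ n - 1))).comp e := by
    refine MonoidAlgebra.algHom_ext ?_ (Subsingleton.elim _ _)
    intro g
    apply LinearMap.ext
    intro x
    show ρ.asAlgebraHom (MonoidAlgebra.single g 1) x = e (MonoidAlgebra.single g 1) * x
    rw [Representation.asAlgebraHom_single_one]
    have h1 : ρ g x = (((-q : ℤ) ^ (Multiplicative.toAdd g).val : ℤ) : ZMod (q ^ n - 1)) * x :=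
      hρ (Multiplicative.toAdd g) x
    rw [h1]
    have h2 : e (MonoidAlgebra.single g 1) = t ^ (Multiplicative.toAdd g).val := he_of g
    rw [h2, htdef, ← Int.cast_pow]
  have hAct : ∀ (r : MonoidAlgebra ℤ (Multiplicative (ZMod n))) (x : ρ.asModule),
      ρ.asModuleEquiv (r • x) = e r * ρ.asModuleEquiv x := by
    intro r x
    rw [Representation.asModuleEquiv_map_smul, hAlg]
    rfl
  set x₀ : ρ.asModule := ρ.asModuleEquiv.symm 1 with hx₀
  -- hypotheses of the general theorem
  have h1 : ∀ r : MonoidAlgebra ℤ (Multiplicative (ZMod n)), r * c = 0 → r = 0 := by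
    intro r hr
    obtain ⟨w, hw⟩ := hm_dvd
    have hz : ((q ^ n - 1 : ℕ) : MonoidAlgebra ℤ (Multiplicative (ZMod n))) * r = 0 := by
      rw [hw]
      calc c * w * r = r * c * w := by ring
      _ = 0 := by rw [hr, zero_mul]
    have hz2 : (q ^ n - 1 : ℕ) • r = 0 := by rw [nsmul_eq_mul]; exact hz
    have keyz : ∀ g : Multiplicative (ZMod n),
        r.coeff g = 0 := by
      intro g
      have hg := congrArg (fun x => MonoidAlgebra.coeff x g) hz2
      simp only [MonoidAlgebra.coeff_smul, MonoidAlgebra.coeff_zero, Finsupp.smul_apply,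
        Finsupp.zero_apply] at hg
      have h2 : ((q ^ n - 1 : ℕ) : ℤ) * (r.coeff g) = 0 := by
        rw [← nsmul_eq_mul]; exact_mod_cast hg
      rcases mul_eq_zero.mp h2 with h' | h'
      · exact absurd (by exact_mod_cast h') (by omega : (q ^ n - 1 : ℕ) ≠ 0)
      · exact h'
    exact MonoidAlgebra.ext (Finsupp.ext fun g => keyz g)
  have h2 : ∀ x : ρ.asModule, ∃ r : MonoidAlgebra ℤ (Multiplicative (ZMod n)), r • x₀ = x := by
    intro x
    refine ⟨algebraMap ℤ (MonoidAlgebra ℤ (Multiplicative (ZMod n)))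
      (((ρ.asModuleEquiv x).val : ℤ)), ?_⟩
    apply ρ.asModuleEquiv.injective
    rw [hAct, hx₀, LinearEquiv.apply_symm_apply, mul_one, AlgHom.commutes]
    show ((((ρ.asModuleEquiv x).val : ℤ)) : ZMod (q ^ n - 1)) = ρ.asModuleEquiv x
    push_cast
    exact ZMod.natCast_rightInverse _
  have h3 : ∀ r : MonoidAlgebra ℤ (Multiplicative (ZMod n)), r • x₀ = 0 →
      ∃ w : MonoidAlgebra ℤ (Multiplicative (ZMod n)), w * c = r := by
    intro r hr
    have h0 : e r = 0 := by
      have hcongr := congrArg ρ.asModuleEquiv hr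
      rw [hAct, hx₀, LinearEquiv.apply_symm_apply, mul_one, map_zero] at hcongr
      exact hcongr
    obtain ⟨w, hw⟩ := hker r h0
    exact ⟨w, by rw [mul_comm]; exact hw.symm⟩
  have h4 : c • x₀ = 0 := by
    apply ρ.asModuleEquiv.injective
    rw [hAct, hx₀, LinearEquiv.apply_symm_apply, mul_one, he_c, map_zero]
  have h5 : ∀ z : (Rep.trivial ℤ (Multiplicative (ZMod n)) ℤ).ρ.asModule,
      c • z = 0 → z = 0 := by
    intro z hz
    have hcongr := congrArg (Rep.trivial ℤ (Multiplicative (ZMod n)) ℤ).ρ.asModuleEquiv hz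
    rw [Representation.asModuleEquiv_map_smul, map_zero, hc, map_add, hσ,
      Representation.asAlgebraHom_of, map_natCast, LinearMap.add_apply,
      Module.End.natCast_apply] at hcongr
    have htr : ((Rep.trivial ℤ (Multiplicative (ZMod n)) ℤ).ρ) (Multiplicative.ofAdd (1 : ZMod n))
        ((Rep.trivial ℤ (Multiplicative (ZMod n)) ℤ).ρ.asModuleEquiv z)
        = (Rep.trivial ℤ (Multiplicative (ZMod n)) ℤ).ρ.asModuleEquiv z := rfl
    rw [htr] at hcongr
    set w : ℤ :=
      (show ℤ from (Rep.trivial ℤ (Multiplicative (ZMod n)) ℤ).ρ.asModuleEquiv z) with hwdef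
    have hfin : (1 + (q : ℤ)) * w = 0 := by
      have hfe : w + q • w = 0 := hcongr
      rw [nsmul_eq_mul] at hfe
      linarith
    have hw0 : w = 0 := by
      rcases mul_eq_zero.mp hfin with h' | h'
      · exfalso
        have : (0 : ℤ) < 1 + (q : ℤ) := by positivity
        omega
      · exact h'
    apply ((Rep.trivial ℤ (Multiplicative (ZMod n)) ℤ).ρ.asModuleEquiv).injective
    rw [map_zero]
    show w = (0 : ℤ)
    exact hw0
  exact isZero_Tor c (Rep.equivalenceModuleMonoidAlgebra.functor.obj (Rep.of ρ)) x₀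
    h1 h2 h3 h4
    (Rep.equivalenceModuleMonoidAlgebra.functor.obj
      (Rep.trivial ℤ (Multiplicative (ZMod n)) ℤ)) h5 s hs
end

section
/- Let q ≥ 2 be an integer and let n be a positive even integer. Let G be the cyclic group Multiplicative (ZMod n), and let ρ be the ℤ-linear representation of G on ZMod (q^n − 1) under which Multiplicative.ofAdd j acts by multiplication by (−q)^(j.val). Then the zeroth group cohomology H^0(G; ρ) (the invariants of ρ) and the zeroth group homology H_0(G; ρ) (the coinvariants of ρ) are both isomorphic as abelian groups to ZMod (q + 1); explicitly, the invariants form the cyclic subgroup of ZMod (q^n − 1) generated by the image of the integer (q^n − 1)/(−q − 1). -/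
private lemma aux_h1 (N K m : ℕ) [NeZero N] (hK : K ≠ 0) (hNm : K * m = N) (x : ZMod N) :
    ((K : ℕ) : ZMod N) * x = 0 ↔ x ∈ AddSubgroup.zmultiples ((m : ℕ) : ZMod N) := by
  have hKa : ((K : ℕ) : ZMod N) * ((m : ℕ) : ZMod N) = 0 := by
    rw [← Nat.cast_mul, hNm, ZMod.natCast_self]
  constructor
  · intro hx
    have hvx : ((x.val : ℕ) : ZMod N) = x := ZMod.natCast_rightInverse x
    have hx' : ((K * x.val : ℕ) : ZMod N) = 0 := by
      push_cast; rw [hvx]; exact hx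
    have hdvd : N ∣ K * x.val := (ZMod.natCast_eq_zero_iff _ _).mp hx'
    have hdvd2 : K * m ∣ K * x.val := by rw [hNm]; exact hdvd
    have hmx : m ∣ x.val := (mul_dvd_mul_iff_left (a := K) hK).mp hdvd2
    obtain ⟨s, hs⟩ := hmx
    refine ⟨(s : ℤ), ?_⟩
    show ((s : ℕ) : ℤ) • ((m : ℕ) : ZMod N) = x
    have : (s : ℤ) • ((m : ℕ) : ZMod N) = ((m * s : ℕ) : ZMod N) := by
      push_cast [zsmul_eq_mul]; ring
    rw [this, ← hs, hvx]
  · rintro ⟨k, rfl⟩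
    rw [mul_smul_comm, hKa, smul_zero]

private lemma aux_e0 (N K m : ℕ) [NeZero N] [NeZero K] (hm : m ≠ 0) (hNm : K * m = N) :
    Nonempty (ZMod K ≃+ AddSubgroup.zmultiples ((m : ℕ) : ZMod N)) := by
  have hKa : ((K : ℕ) : ZMod N) * ((m : ℕ) : ZMod N) = 0 := by
    rw [← Nat.cast_mul, hNm, ZMod.natCast_self]
  have hlift0 : (zmultiplesHom (ZMod N) ((m : ℕ) : ZMod N)) ((K : ℕ) : ℤ) = 0 := by
    show ((K : ℕ) : ℤ) • ((m : ℕ) : ZMod N) = 0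
    rw [zsmul_eq_mul, Int.cast_natCast, hKa]
  set f : ZMod K →+ ZMod N := ZMod.lift K ⟨zmultiplesHom (ZMod N) ((m : ℕ) : ZMod N), hlift0⟩
    with hfdef
  have hfc : ∀ x : ℤ, f ((x : ℤ) : ZMod K) = x • ((m : ℕ) : ZMod N) :=
    fun x => ZMod.lift_coe _ _ x
  have finj : Function.Injective f := by
    rw [hfdef, ZMod.lift_injective]
    intro x hx
    have hx' : ((x * (m : ℤ) : ℤ) : ZMod N) = 0 := by
      have h : (x : ℤ) • ((m : ℕ) : ZMod N) = ((x * (m : ℤ) : ℤ) : ZMod N) := by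
        push_cast [zsmul_eq_mul]; ring
      rw [← h]; exact hx
    have hdvd : ((N : ℕ) : ℤ) ∣ x * (m : ℤ) := (ZMod.intCast_zmod_eq_zero_iff_dvd _ _).mp hx'
    rw [← hNm] at hdvd
    push_cast at hdvd
    obtain ⟨c, hc⟩ := hdvd
    have hmne : ((m : ℕ) : ℤ) ≠ 0 := by exact_mod_cast hm
    have hxKc : x = (K : ℤ) * c := by
      refine mul_right_cancel₀ hmne ?_
      linear_combination hc
    refine (ZMod.intCast_zmod_eq_zero_iff_dvd _ _).mpr ⟨c, hxKc⟩
  have fmem : ∀ y : ZMod K, f y ∈ AddSubgroup.zmultiples ((m : ℕ) : ZMod N) := by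
    intro y
    obtain ⟨x, rfl⟩ := ZMod.intCast_surjective y
    rw [hfc]
    exact ⟨x, rfl⟩
  refine ⟨AddEquiv.ofBijective (f.codRestrict _ fmem) ⟨?_, ?_⟩⟩
  · intro x y h
    exact finj (congrArg Subtype.val h)
  · rintro ⟨b, k, rfl⟩
    exact ⟨((k : ℤ) : ZMod K), Subtype.ext (hfc k)⟩

/-- Let `q ≥ 2`, `n > 0` even, `G = Multiplicative (ZMod n)`, and let
`ρ` be the ℤ-linear representation of `G` on `ZMod (q^n - 1)` where
`Multiplicative.ofAdd j` acts by multiplication by `(-q) ^ j.val`.  Then the invariants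
of `ρ` (i.e. `H^0(G; ρ)`) and the coinvariants of `ρ` (i.e. `H_0(G; ρ)`) are both
isomorphic, as abelian groups, to `ZMod (q + 1)`; explicitly, the invariants form the
cyclic subgroup of `ZMod (q^n - 1)` generated by the image of the integer
`(q^n - 1)/(-q - 1)`. -/
theorem stmt_11 (n q : ℕ) (hn : 0 < n) (hne : Even n) (hq : 2 ≤ q)
    (ρ : Representation ℤ (Multiplicative (ZMod n)) (ZMod (q ^ n - 1)))
    (hρ : ∀ (j : ZMod n) (x : ZMod (q ^ n - 1)),
      ρ (Multiplicative.ofAdd j) x = (((-q : ℤ) ^ j.val : ℤ) : ZMod (q ^ n - 1)) * x) :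
    Nonempty (ρ.invariants ≃+ ZMod (q + 1)) ∧
    Nonempty ((ZMod (q ^ n - 1) ⧸
        Submodule.span ℤ (Set.range
          fun p : Multiplicative (ZMod n) × ZMod (q ^ n - 1) => p.2 - ρ p.1 p.2)) ≃+
      ZMod (q + 1)) ∧
    (ρ.invariants : Set (ZMod (q ^ n - 1)))
      = (AddSubgroup.zmultiples
          (((((q : ℤ) ^ n - 1) / (-(q : ℤ) - 1) : ℤ)) : ZMod (q ^ n - 1)) :
            Set (ZMod (q ^ n - 1))) := by
  classical
  have hn2 : 2 ≤ n := by rcases hne with ⟨k, hk⟩; omega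
  have hq1 : 1 ≤ q ^ n := Nat.one_le_pow _ _ (by omega)
  have hcastN : ((q ^ n - 1 : ℕ) : ℤ) = (q : ℤ) ^ n - 1 := by
    rw [Nat.cast_sub hq1]; push_cast; ring
  -- divisibility q + 1 ∣ q ^ n - 1
  have hmodq : ((q : ℤ)) ≡ -1 [ZMOD ((q + 1 : ℕ) : ℤ)] := by
    refine Int.ModEq.symm (Int.modEq_iff_dvd.mpr ⟨1, by push_cast; ring⟩)
  have hKdvdZ : ((q + 1 : ℕ) : ℤ) ∣ (q : ℤ) ^ n - 1 := by
    have h2 := hmodq.pow n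
    rw [hne.neg_one_pow] at h2
    exact h2.symm.dvd
  have hKdvd : (q + 1) ∣ (q ^ n - 1) := by
    have h : ((q + 1 : ℕ) : ℤ) ∣ ((q ^ n - 1 : ℕ) : ℤ) := by rw [hcastN]; exact hKdvdZ
    exact_mod_cast h
  have hNm : (q + 1) * ((q ^ n - 1) / (q + 1)) = q ^ n - 1 := Nat.mul_div_cancel' hKdvd
  have hq2n : q ^ 2 ≤ q ^ n := Nat.pow_le_pow_right (by omega) hn2
  have hqsq : q ^ 2 = q * q := sq q
  have hqq : 2 * q ≤ q * q := by nlinarith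
  have hN0 : 0 < q ^ n - 1 := by omega
  have hKN : q + 1 ≤ q ^ n - 1 := by omega
  have hm0 : 0 < (q ^ n - 1) / (q + 1) := Nat.div_pos hKN (by omega)
  haveI : NeZero (q ^ n - 1) := ⟨hN0.ne'⟩
  haveI : NeZero (q + 1) := ⟨by omega⟩
  haveI : Fact (1 < n) := ⟨hn2⟩
  have hval1 : (1 : ZMod n).val = 1 := ZMod.val_one n
  have h1 := aux_h1 (q ^ n - 1) (q + 1) ((q ^ n - 1) / (q + 1)) (by omega) hNm
  -- characterization of invariants
  have h2 : ∀ x : ZMod (q ^ n - 1), x ∈ ρ.invariants ↔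
      ((q + 1 : ℕ) : ZMod (q ^ n - 1)) * x = 0 := by
    intro x
    rw [Representation.mem_invariants]
    constructor
    · intro hx
      have h := hx (Multiplicative.ofAdd (1 : ZMod n))
      rw [hρ, hval1, pow_one] at h
      push_cast at h ⊢
      linear_combination -h
    · intro hx
      have hstep : ((-q : ℤ) : ZMod (q ^ n - 1)) * x = x := by
        push_cast at hx ⊢
        linear_combination -hx
      have hpow : ∀ v : ℕ, (((-q : ℤ) ^ v : ℤ) : ZMod (q ^ n - 1)) * x = x := by
        intro v
        induction v with
        | zero => simp
        | succ v ih => rw [pow_succ, Int.cast_mul, mul_assoc, hstep, ih]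
      intro g
      rw [← ofAdd_toAdd g, hρ]
      exact hpow _
  have hmem : ∀ x : ZMod (q ^ n - 1), x ∈ ρ.invariants ↔
      x ∈ AddSubgroup.zmultiples (((q ^ n - 1) / (q + 1) : ℕ) : ZMod (q ^ n - 1)) :=
    fun x => (h2 x).trans (h1 x)
  -- the generator in the statement
  have hgen : (((((q : ℤ) ^ n - 1) / (-(q : ℤ) - 1) : ℤ)) : ZMod (q ^ n - 1))
      = -(((q ^ n - 1) / (q + 1) : ℕ) : ZMod (q ^ n - 1)) := by
    have e1 : ((q : ℤ) ^ n - 1) / (-(q : ℤ) - 1)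
        = -((((q ^ n - 1) / (q + 1) : ℕ)) : ℤ) := by
      have e2 : (-(q : ℤ) - 1) = -((q + 1 : ℕ) : ℤ) := by push_cast; ring
      rw [e2, ← hcastN, Int.ediv_neg, Int.natCast_div]
    rw [e1, Int.cast_neg, Int.cast_natCast]
  have hzneg : AddSubgroup.zmultiples (-(((q ^ n - 1) / (q + 1) : ℕ) : ZMod (q ^ n - 1)))
      = AddSubgroup.zmultiples ((((q ^ n - 1) / (q + 1) : ℕ)) : ZMod (q ^ n - 1)) := by
    ext x
    constructor
    · rintro ⟨k, rfl⟩; exact ⟨-k, by simp⟩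
    · rintro ⟨k, rfl⟩; exact ⟨-k, by simp⟩
  obtain ⟨e0⟩ := aux_e0 (q ^ n - 1) (q + 1) ((q ^ n - 1) / (q + 1)) hm0.ne' hNm
  have einv : ρ.invariants ≃+
      AddSubgroup.zmultiples ((((q ^ n - 1) / (q + 1) : ℕ)) : ZMod (q ^ n - 1)) :=
    { toFun := fun x => ⟨x.1, (hmem x.1).mp x.2⟩
      invFun := fun x => ⟨x.1, (hmem x.1).mpr x.2⟩
      left_inv := fun x => rfl
      right_inv := fun x => rfl
      map_add' := fun x y => rfl }
  refine ⟨⟨einv.trans e0.symm⟩, ?_, ?_⟩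
  · -- coinvariants
    set T := Submodule.span ℤ (Set.range
      fun p : Multiplicative (ZMod n) × ZMod (q ^ n - 1) => p.2 - ρ p.1 p.2) with hTdef
    set c : ZMod (q ^ n - 1) →+* ZMod (q + 1) := ZMod.castHom hKdvd (ZMod (q + 1)) with hcdef
    set L : ZMod (q ^ n - 1) →ₗ[ℤ] ZMod (q + 1) := c.toAddMonoidHom.toIntLinearMap with hLdef
    have hcq : ((-q : ℤ) : ZMod (q + 1)) = 1 := by
      have h := ZMod.natCast_self (q + 1)
      push_cast at h ⊢
      linear_combination -h
    have hKmul : ∀ y : ZMod (q ^ n - 1), ((q + 1 : ℕ) : ZMod (q ^ n - 1)) * y ∈ T := by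
      intro y
      have hg : (y - ρ (Multiplicative.ofAdd (1 : ZMod n)) y) ∈ T :=
        Submodule.subset_span ⟨(Multiplicative.ofAdd (1 : ZMod n), y), rfl⟩
      have heq : y - ρ (Multiplicative.ofAdd (1 : ZMod n)) y
          = ((q + 1 : ℕ) : ZMod (q ^ n - 1)) * y := by
        rw [hρ, hval1, pow_one]
        push_cast
        ring
      rwa [heq] at hg
    have hTker : T = LinearMap.ker L := by
      apply le_antisymm
      · rw [hTdef, Submodule.span_le]
        rintro _ ⟨⟨g, x⟩, rfl⟩
        simp only [SetLike.mem_coe, LinearMap.mem_ker]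
        show c (x - ρ g x) = 0
        rw [← ofAdd_toAdd g, hρ, map_sub, map_mul, map_intCast, Int.cast_pow,
          hcq, one_pow, one_mul, sub_self]
      · intro x hx
        have hx0 : c x = 0 := hx
        have hvx : ((x.val : ℕ) : ZMod (q ^ n - 1)) = x := ZMod.natCast_rightInverse x
        have hxv : ((x.val : ℕ) : ZMod (q + 1)) = 0 := by
          rw [← map_natCast c, hvx]; exact hx0
        have hdvd : (q + 1) ∣ x.val := (ZMod.natCast_eq_zero_iff _ _).mp hxv
        obtain ⟨t, ht⟩ := hdvd
        have hxt : x = ((q + 1 : ℕ) : ZMod (q ^ n - 1)) * ((t : ℕ) : ZMod (q ^ n - 1)) := by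
          rw [← Nat.cast_mul, ← ht, hvx]
        rw [hxt]
        exact hKmul _
    have hsurj : Function.Surjective L := by
      intro y
      refine ⟨((y.val : ℕ) : ZMod (q ^ n - 1)), ?_⟩
      show c _ = y
      rw [map_natCast]
      exact ZMod.natCast_rightInverse y
    exact ⟨((Submodule.quotEquivOfEq T (LinearMap.ker L) hTker).trans
      (L.quotKerEquivOfSurjective hsurj)).toAddEquiv⟩
  · -- set equality
    rw [hgen, hzneg]
    ext x
    exact hmem x
end

section
/- Let n ≥ 1 and q ≥ 2 be integers. Let G be the cyclic group Multiplicative (ZMod n), and let ρ be the ℤ-linear representation of G on ZMod (q^n − 1) under which Multiplicative.ofAdd j acts by multiplication by q^(j.val). Then the additive map ZMod (q^n − 1) → ZMod (q^n − 1) given by multiplication by the integer ∑_{j=0}^{n−1} q^j descends to a well-defined additive group isomorphism from the coinvariants of ρ onto the invariants of ρ. -/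
/-- Let `n ≥ 1`, `q ≥ 2`, `G = Multiplicative (ZMod n)`, and let `ρ`
be the ℤ-linear representation of `G` on `ZMod (q^n - 1)` where `Multiplicative.ofAdd j`
acts by multiplication by `q ^ j.val`.  Then multiplication by the integer
`∑_{j=0}^{n-1} q^j` descends to a well-defined additive group isomorphism from the
coinvariants of `ρ` onto the invariants of `ρ`. -/
theorem stmt_13 (n q : ℕ) (hn : 1 ≤ n) (hq : 2 ≤ q)
    (ρ : Representation ℤ (Multiplicative (ZMod n)) (ZMod (q ^ n - 1)))
    (hρ : ∀ (j : ZMod n) (x : ZMod (q ^ n - 1)),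
      ρ (Multiplicative.ofAdd j) x = (q : ZMod (q ^ n - 1)) ^ j.val * x) :
    ∃ φ : (ZMod (q ^ n - 1) ⧸
            Submodule.span ℤ (Set.range
              fun p : Multiplicative (ZMod n) × ZMod (q ^ n - 1) => p.2 - ρ p.1 p.2)) ≃+
          ρ.invariants,
      ∀ x : ZMod (q ^ n - 1),
        (φ (Submodule.Quotient.mk x) : ZMod (q ^ n - 1))
          = ((∑ j ∈ Finset.range n, q ^ j : ℕ) : ZMod (q ^ n - 1)) * x := by
  classical
  set M := ZMod (q ^ n - 1) with hM
  set s : ℕ := ∑ j ∈ Finset.range n, q ^ j with hs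
  have hq1 : 1 ≤ q := by omega
  have hqn : 2 ≤ q ^ n := le_trans hq (Nat.le_self_pow (by omega) q)
  haveI : NeZero (q ^ n - 1) := ⟨by omega⟩
  -- arithmetic: s * (q - 1) = q ^ n - 1
  have hNs : s * (q - 1) = q ^ n - 1 := by
    have h := geom_sum_mul (q : ℤ) n
    have h1 : (1 : ℕ) ≤ q ^ n := by omega
    zify [hq1, h1, hs]
    push_cast at h ⊢
    linarith [h]
  -- key identities in M
  have key1 : ((q : M) - 1) * (s : M) = 0 := by
    have h0 : (((s * (q - 1)) : ℕ) : M) = 0 := by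
      rw [hNs]; exact ZMod.natCast_self _
    rw [Nat.cast_mul, Nat.cast_sub hq1, Nat.cast_one] at h0
    rw [mul_comm]; exact h0
  have key2 : ∀ j : ℕ, (q : M) ^ j * (s : M) = (s : M) := by
    intro j
    have h := geom_sum_mul (q : M) j
    have hz : ((q : M) ^ j - 1) * (s : M) = 0 := by
      rw [← h, mul_assoc, key1, mul_zero]
    linear_combination hz
  have hval : ∀ (g : Multiplicative (ZMod n)) (x : M),
      ρ g x = (q : M) ^ (Multiplicative.toAdd g).val * x := fun g x => hρ g.toAdd x
  -- the submodule S
  set S : Submodule ℤ M := Submodule.span ℤ (Set.range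
      fun p : Multiplicative (ZMod n) × M => p.2 - ρ p.1 p.2) with hS
  -- (q-1)*y ∈ S for all y
  have hq1mem : ∀ y : M, ((q : M) - 1) * y ∈ S := by
    intro y
    rcases Nat.lt_or_ge n 2 with h1 | h2
    · -- n = 1 : (q : M) = 1
      have hn1 : n = 1 := by omega
      have hqM : (q : M) - 1 = 0 := by
        have h0 : (((q - 1 : ℕ)) : M) = 0 := by
          rw [show q - 1 = q ^ n - 1 by subst hn1; simp]
          exact ZMod.natCast_self _
        push_cast [Nat.cast_sub hq1] at h0
        exact h0
      rw [hqM, zero_mul]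
      exact Submodule.zero_mem S
    · haveI : Fact (1 < n) := ⟨h2⟩
      have hmem : (-y) - ρ (Multiplicative.ofAdd (1 : ZMod n)) (-y) ∈ S :=
        Submodule.subset_span ⟨(Multiplicative.ofAdd (1 : ZMod n), -y), rfl⟩
      rw [hρ, ZMod.val_one] at hmem
      have : ((q : M) - 1) * y = -y - (q : M) ^ 1 * (-y) := by ring
      rw [this]
      exact hmem
  -- the linear map
  have hinv : ∀ x : M, (s : M) * x ∈ ρ.invariants := by
    intro x
    rw [Representation.mem_invariants]
    intro g
    rw [hval g, ← mul_assoc, key2]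
  let f0 : M →ₗ[ℤ] M := LinearMap.mulLeft ℤ ((s : ℕ) : M)
  let f : M →ₗ[ℤ] ρ.invariants := LinearMap.codRestrict ρ.invariants f0 hinv
  have hf0 : ∀ x : M, f0 x = (s : M) * x := fun _ => rfl
  have hker : S ≤ LinearMap.ker f := by
    rw [hS, Submodule.span_le]
    rintro _ ⟨⟨g, x⟩, rfl⟩
    simp only [SetLike.mem_coe, LinearMap.mem_ker]
    apply Subtype.ext
    show f0 (x - ρ g x) = 0
    rw [hf0, hval g x]
    linear_combination (-x) * key2 (Multiplicative.toAdd g).val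
  let ψ := Submodule.liftQ S f hker
  have hψ : ∀ x : M, ψ (Submodule.Quotient.mk x) = f x := fun _ => rfl
  -- injectivity
  have hker2 : LinearMap.ker f ≤ S := by
      intro x hx
      have hx0 : (s : M) * x = 0 := congrArg Subtype.val (LinearMap.mem_ker.mp hx)
      have hxv : ((x.val : ℕ) : M) = x := ZMod.natCast_rightInverse x
      have hdvdN : (q ^ n - 1) ∣ s * x.val := by
        rw [← ZMod.natCast_eq_zero_iff]
        rw [Nat.cast_mul]
        rw [hxv, hx0]
      have hspos : 0 < s := by
        rw [hs]
        exact Finset.sum_pos (fun i _ => pow_pos (by omega) i)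
          (by simpa using by omega)
      have hdvd : (q - 1) ∣ x.val := by
        rcases hdvdN with ⟨c, hc⟩
        refine ⟨c, Nat.eq_of_mul_eq_mul_left hspos ?_⟩
        rw [hc, ← hNs]; ring
      rcases hdvd with ⟨c, hc⟩
      have hx2 : x = ((q : M) - 1) * (c : M) := by
        rw [← hxv, hc]
        rw [Nat.cast_mul, Nat.cast_sub hq1, Nat.cast_one]
      rw [hx2]
      exact hq1mem _
  have hinj : Function.Injective ψ := by
    rw [← LinearMap.ker_eq_bot]
    exact Submodule.ker_liftQ_eq_bot S f hker hker2
  -- surjectivity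
  have hsurj : Function.Surjective ψ := by
    rintro ⟨x, hx⟩
    have hfix : ((q : M) - 1) * x = 0 := by
      rcases Nat.lt_or_ge n 2 with h1 | h2
      · have hn1 : n = 1 := by omega
        have hqM : (q : M) - 1 = 0 := by
          have h0 : (((q - 1 : ℕ)) : M) = 0 := by
            rw [show q - 1 = q ^ n - 1 by subst hn1; simp]
            exact ZMod.natCast_self _
          push_cast [Nat.cast_sub hq1] at h0
          exact h0
        rw [hqM, zero_mul]
      · haveI : Fact (1 < n) := ⟨h2⟩
        have h := (Representation.mem_invariants ρ x).mp hx (Multiplicative.ofAdd (1 : ZMod n))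
        rw [hρ, ZMod.val_one] at h
        linear_combination h
    have hxv : ((x.val : ℕ) : M) = x := ZMod.natCast_rightInverse x
    have hdvdN : (q ^ n - 1) ∣ (q - 1) * x.val := by
      rw [← ZMod.natCast_eq_zero_iff]
      rw [Nat.cast_mul, Nat.cast_sub hq1, Nat.cast_one]
      rw [hxv, hfix]
    have hdvd : s ∣ x.val := by
      rcases hdvdN with ⟨c, hc⟩
      refine ⟨c, Nat.eq_of_mul_eq_mul_left (show 0 < q - 1 by omega) ?_⟩
      rw [hc, ← hNs]; ring
    rcases hdvd with ⟨c, hc⟩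
    refine ⟨Submodule.Quotient.mk ((c : ℕ) : M), ?_⟩
    rw [hψ]
    apply Subtype.ext
    show (s : M) * ((c : ℕ) : M) = x
    rw [← hxv, hc]
    rw [Nat.cast_mul]
  exact ⟨(LinearEquiv.ofBijective ψ ⟨hinj, hsurj⟩).toAddEquiv, fun x => rfl⟩
end

section
/- Let q ≥ 2 be an integer and let n be a positive even integer. Let G be the cyclic group Multiplicative (ZMod n), and let ρ be the ℤ-linear representation of G on ZMod (q^n − 1) under which Multiplicative.ofAdd j acts by multiplication by (−q)^(j.val). Then the additive map ZMod (q^n − 1) → ZMod (q^n − 1) given by multiplication by the integer ∑_{j=0}^{n−1} (−q)^j descends to a well-defined additive group isomorphism from the coinvariants of ρ onto the invariants of ρ. -/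
/-- Let `q ≥ 2`, `n > 0` even, `G = Multiplicative (ZMod n)`, and let
`ρ` be the ℤ-linear representation of `G` on `ZMod (q^n - 1)` where
`Multiplicative.ofAdd j` acts by multiplication by `(-q) ^ j.val`.  Then multiplication
by the integer `∑_{j=0}^{n-1} (-q)^j` descends to a well-defined additive group
isomorphism from the coinvariants of `ρ` onto the invariants of `ρ`. -/
theorem stmt_14 (n q : ℕ) (hn : 0 < n) (hne : Even n) (hq : 2 ≤ q)
    (ρ : Representation ℤ (Multiplicative (ZMod n)) (ZMod (q ^ n - 1)))
    (hρ : ∀ (j : ZMod n) (x : ZMod (q ^ n - 1)),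
      ρ (Multiplicative.ofAdd j) x = (((-q : ℤ) ^ j.val : ℤ) : ZMod (q ^ n - 1)) * x) :
    ∃ φ : (ZMod (q ^ n - 1) ⧸
            Submodule.span ℤ (Set.range
              fun p : Multiplicative (ZMod n) × ZMod (q ^ n - 1) => p.2 - ρ p.1 p.2)) ≃+
          ρ.invariants,
      ∀ x : ZMod (q ^ n - 1),
        (φ (Submodule.Quotient.mk x) : ZMod (q ^ n - 1))
          = (((∑ j ∈ Finset.range n, (-q : ℤ) ^ j : ℤ)) : ZMod (q ^ n - 1)) * x := by
  have hn2 : 2 ≤ n := by obtain ⟨k, hk⟩ := hne; omega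
  haveI : Fact (1 < n) := ⟨hn2⟩
  have hq1 : 1 ≤ q ^ n := Nat.one_le_pow _ _ (by omega)
  have h4 : 4 ≤ q ^ n := by
    calc (4:ℕ) = 2 ^ 2 := by norm_num
    _ ≤ 2 ^ n := Nat.pow_le_pow_right (by norm_num) hn2
    _ ≤ q ^ n := Nat.pow_le_pow_left hq n
  haveI : NeZero (q ^ n - 1) := ⟨by omega⟩
  set S : ℤ := ∑ j ∈ Finset.range n, (-q : ℤ) ^ j with hSdef
  have hNcast : ((q ^ n - 1 : ℕ) : ℤ) = (q : ℤ) ^ n - 1 := by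
    push_cast [hq1]; ring
  have hkey : S * (-(q:ℤ) - 1) = ((q ^ n - 1 : ℕ) : ℤ) := by
    rw [hSdef, geom_sum_mul, hne.neg_pow, hNcast]
  have hdvd : ∀ v : ℕ, ((q ^ n - 1 : ℕ):ℤ) ∣ ((-q:ℤ)^v - 1) * S := by
    intro v
    refine ⟨∑ i ∈ Finset.range v, (-(q:ℤ))^i, ?_⟩
    have h1 := geom_sum_mul (-(q:ℤ)) v
    linear_combination (-S) * h1 + (∑ i ∈ Finset.range v, (-(q:ℤ))^i) * hkey
  have hz : ∀ v : ℕ, (((-q:ℤ)^v : ℤ) : ZMod (q ^ n - 1)) * ((S : ℤ) : ZMod (q ^ n - 1))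
      = ((S : ℤ) : ZMod (q ^ n - 1)) := by
    intro v
    have h : ((((-q:ℤ)^v - 1) * S : ℤ) : ZMod (q ^ n - 1)) = 0 :=
      (ZMod.intCast_zmod_eq_zero_iff_dvd _ _).mpr (hdvd v)
    have h2 : ((-q:ℤ)^v * S - S) = ((-q:ℤ)^v - 1) * S := by ring
    rw [← sub_eq_zero, ← Int.cast_mul, ← Int.cast_sub, h2, h]
  have hD : ((q ^ n - 1 : ℕ):ℤ) = ((q:ℤ)+1) * (-S) := by linear_combination -hkey
  have hSne : (-S : ℤ) ≠ 0 := by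
    intro h
    rw [h, mul_zero] at hD
    have : ((q ^ n - 1 : ℕ):ℤ) ≠ 0 := by exact_mod_cast (NeZero.ne (q ^ n - 1))
    exact this hD
  set Lmul : ZMod (q ^ n - 1) →ₗ[ℤ] ZMod (q ^ n - 1) :=
    { toFun := fun x => ((S:ℤ) : ZMod (q ^ n - 1)) * x
      map_add' := fun a b => mul_add _ a b
      map_smul' := fun c x => by
        simp only [zsmul_eq_mul, RingHom.id_apply]; ring } with hLmul
  have hmem : ∀ x : ZMod (q ^ n - 1), Lmul x ∈ ρ.invariants := by
    intro x g
    have hg : Multiplicative.ofAdd g.toAdd = g := rfl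
    have hx := hρ g.toAdd (Lmul x)
    rw [hg] at hx
    rw [hx]
    show (((-q:ℤ) ^ (g.toAdd).val : ℤ) : ZMod (q ^ n - 1)) * (((S:ℤ) : ZMod (q ^ n - 1)) * x)
      = ((S:ℤ): ZMod (q ^ n - 1)) * x
    rw [← mul_assoc, hz]
  set L2 : ZMod (q ^ n - 1) →ₗ[ℤ] ρ.invariants :=
    LinearMap.codRestrict ρ.invariants Lmul hmem with hL2
  set spanM : Submodule ℤ (ZMod (q ^ n - 1)) := Submodule.span ℤ (Set.range
      fun p : Multiplicative (ZMod n) × ZMod (q ^ n - 1) => p.2 - ρ p.1 p.2) with hspan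
  have hle : spanM ≤ LinearMap.ker L2 := by
    rw [hspan, Submodule.span_le]
    rintro _ ⟨⟨g, y⟩, rfl⟩
    simp only [SetLike.mem_coe, LinearMap.mem_ker]
    apply Subtype.ext
    show ((S:ℤ) : ZMod (q ^ n - 1)) * (y - ρ g y) = 0
    have hg : Multiplicative.ofAdd g.toAdd = g := rfl
    have hgy := hρ g.toAdd y
    rw [hg] at hgy
    rw [hgy]
    linear_combination (-y) * hz (Multiplicative.toAdd g).val
  set φ₀ := Submodule.liftQ spanM L2 hle with hφ₀
  have hker : LinearMap.ker L2 ≤ spanM := by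
    intro x hx
    have hx0 : ((S:ℤ) : ZMod (q ^ n - 1)) * x = 0 := congrArg Subtype.val hx
    have hxm : ((x.val : ℤ) : ZMod (q ^ n - 1)) = x := by
      push_cast
      exact ZMod.natCast_rightInverse x
    have hdv : ((q ^ n - 1 : ℕ):ℤ) ∣ S * (x.val : ℤ) := by
      rw [← ZMod.intCast_zmod_eq_zero_iff_dvd, Int.cast_mul, hxm, hx0]
    have hq1dvd : ((q:ℤ)+1) ∣ (x.val : ℤ) := by
      have h2 : (-S) * ((q:ℤ)+1) ∣ (-S) * (x.val : ℤ) := by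
        rw [mul_comm, ← hD, neg_mul]
        exact dvd_neg.mpr hdv
      exact (mul_dvd_mul_iff_left hSne).mp h2
    obtain ⟨u, hu⟩ := hq1dvd
    set w : ZMod (q ^ n - 1) := ((u : ℤ) : ZMod (q ^ n - 1)) with hw
    have hxw : x = w - ρ (Multiplicative.ofAdd (1 : ZMod n)) w := by
      rw [hρ, ZMod.val_one, pow_one, ← hxm, hu]
      push_cast
      ring
    rw [hxw, hspan]
    exact Submodule.subset_span ⟨(Multiplicative.ofAdd (1:ZMod n), w), rfl⟩
  have hinj : Function.Injective φ₀ := by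
    rw [hφ₀, ← LinearMap.ker_eq_bot]
    exact Submodule.ker_liftQ_eq_bot spanM L2 hle hker
  have hsurj : Function.Surjective φ₀ := by
    rintro ⟨y, hy⟩
    have hy1 : ρ (Multiplicative.ofAdd (1 : ZMod n)) y = y := hy (Multiplicative.ofAdd 1)
    rw [hρ, ZMod.val_one, pow_one] at hy1
    have hym : ((y.val : ℤ) : ZMod (q ^ n - 1)) = y := by
      push_cast
      exact ZMod.natCast_rightInverse y
    have hdv : ((q ^ n - 1 : ℕ):ℤ) ∣ ((q:ℤ)+1) * (y.val : ℤ) := by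
      rw [← ZMod.intCast_zmod_eq_zero_iff_dvd, Int.cast_mul, hym]
      push_cast at hy1 ⊢
      linear_combination -hy1
    have hDdvd : (-S) ∣ (y.val : ℤ) := by
      have h2 : ((q:ℤ)+1) * (-S) ∣ ((q:ℤ)+1) * (y.val : ℤ) := by rw [← hD]; exact hdv
      have hq1ne : ((q:ℤ)+1) ≠ 0 := by positivity
      exact (mul_dvd_mul_iff_left hq1ne).mp h2
    obtain ⟨t, ht⟩ := hDdvd
    refine ⟨Submodule.Quotient.mk (((-t : ℤ)) : ZMod (q ^ n - 1)), ?_⟩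
    rw [hφ₀, Submodule.liftQ_apply]
    apply Subtype.ext
    show ((S:ℤ) : ZMod (q ^ n - 1)) * ((-t : ℤ) : ZMod (q ^ n - 1)) = y
    rw [← hym, ht]
    push_cast
    ring
  refine ⟨(LinearEquiv.ofBijective φ₀ ⟨hinj, hsurj⟩).toAddEquiv, ?_⟩
  intro x
  rfl
end
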